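/- arXiv:1710.06938 — 8 statements merged into one kernel-verified Lean document; each statement's English description precedes it below -/
import Mathlib

section
/- Let E be a finite-dimensional real normed vector space and Ω ⊆ E a nonempty bounded open convex set. For any two distinct points x, y ∈ Ω, the affine line through x and y meets the frontier ∂Ω of Ω in exactly two points; moreover these can be labeled a and b so that x lies in the open segment between a and y, and y lies in the open segment between x and b. -/
open Set AffineMap Filter

/-- For a nonempty bounded open convex set `Ω` in a finite-dimensional real normed
vector space, the affine line through two distinct points `x, y ∈ Ω` meets the
frontier of `Ω` in exactly two points `a, b`, labeled so that `x` lies in the open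
segment between `a` and `y`, and `y` lies in the open segment between `x` and `b`. -/
theorem line_meets_frontier_in_exactly_two_points
    {E : Type*} [NormedAddCommGroup E] [NormedSpace ℝ E] [FiniteDimensional ℝ E]
    (Ω : Set E) (hne : Ω.Nonempty) (hbdd : Bornology.IsBounded Ω)
    (hop : IsOpen Ω) (hconv : Convex ℝ Ω)
    {x y : E} (hx : x ∈ Ω) (hy : y ∈ Ω) (hxy : x ≠ y) :
    ∃ a b : E, a ≠ b ∧ a ∈ frontier Ω ∧ b ∈ frontier Ω ∧
      a ∈ affineSpan ℝ ({x, y} : Set E) ∧ b ∈ affineSpan ℝ ({x, y} : Set E) ∧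
      x ∈ openSegment ℝ a y ∧ y ∈ openSegment ℝ x b ∧
      ∀ c ∈ frontier Ω, c ∈ affineSpan ℝ ({x, y} : Set E) → c = a ∨ c = b := by
  set f : ℝ → E := fun t => t • (y - x) + x with hf
  have hfc : Continuous f := by fun_prop
  set S : Set ℝ := f ⁻¹' Ω with hS
  have hSopen : IsOpen S := hop.preimage hfc
  have hSconv : Convex ℝ S := by
    have : S = (AffineMap.lineMap x y : ℝ →ᵃ[ℝ] E) ⁻¹' Ω := by
      ext t; simp [hS, hf, lineMap_apply_module']
    rw [this]; exact hconv.affine_preimage _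
  have hS0 : (0:ℝ) ∈ S := by simpa [hS, hf] using hx
  have hS1 : (1:ℝ) ∈ S := by simpa [hS, hf] using hy
  have hyx : y - x ≠ 0 := sub_ne_zero.mpr hxy.symm
  have hnorm : (0:ℝ) < ‖y - x‖ := norm_pos_iff.mpr hyx
  -- boundedness of S
  obtain ⟨r, hr⟩ := hbdd.subset_closedBall x
  have hSb : ∀ t ∈ S, |t| ≤ r / ‖y - x‖ := by
    intro t ht
    have := hr ht
    rw [Metric.mem_closedBall, dist_eq_norm] at this
    have h2 : ‖f t - x‖ = |t| * ‖y - x‖ := by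
      simp [hf, norm_smul, abs_of_nonneg, Real.norm_eq_abs]
    rw [h2] at this
    exact (le_div_iff₀ hnorm).mpr this
  have hbddA : BddAbove S := ⟨r / ‖y - x‖, fun t ht => (le_abs_self t).trans (hSb t ht)⟩
  have hbddB : BddBelow S := ⟨-(r / ‖y - x‖), fun t ht => neg_le_of_abs_le (hSb t ht)⟩
  set α := sInf S with hα
  set β := sSup S with hβ
  have hSne : S.Nonempty := ⟨0, hS0⟩
  -- S = Ioo α β
  have hSIoo : S = Ioo α β := by
    apply Subset.antisymm
    · intro t ht
      obtain ⟨ε, hε, hball⟩ := Metric.isOpen_iff.mp hSopen t ht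
      constructor
      · have h1 : t - ε/2 ∈ S := by
          apply hball
          simp only [Metric.mem_ball, Real.dist_eq]
          rw [abs_lt]; constructor <;> linarith
        calc α ≤ t - ε/2 := csInf_le hbddB h1
          _ < t := by linarith
      · have h1 : t + ε/2 ∈ S := by
          apply hball
          simp only [Metric.mem_ball, Real.dist_eq]
          rw [abs_lt]; constructor <;> linarith
        calc t < t + ε/2 := by linarith
          _ ≤ β := le_csSup hbddA h1
    · intro t ht
      obtain ⟨t₁, ht₁S, ht₁⟩ := exists_lt_of_csInf_lt hSne ht.1
      obtain ⟨t₂, ht₂S, ht₂⟩ := exists_lt_of_lt_csSup hSne ht.2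
      exact hSconv.ordConnected.out ht₁S ht₂S ⟨ht₁.le, ht₂.le⟩
  have h0mem : (0:ℝ) ∈ Ioo α β := hSIoo ▸ hS0
  have h1mem : (1:ℝ) ∈ Ioo α β := hSIoo ▸ hS1
  have hαβ : α < β := h0mem.1.trans h0mem.2
  have hclS : closure S = Icc α β := by rw [hSIoo, closure_Ioo hαβ.ne]
  -- frontier of Ω is closure \ Ω
  have hfr : frontier Ω = closure Ω \ Ω := by
    rw [frontier, hop.interior_eq]
  have hmaps : MapsTo f S Ω := fun t ht => ht
  have hfmem : ∀ t ∈ Icc α β, f t ∈ closure Ω := by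
    intro t ht
    exact map_mem_closure hfc (hclS ▸ ht) hmaps
  have hafr : f α ∈ frontier Ω := by
    rw [hfr]
    refine ⟨hfmem α ⟨le_refl _, hαβ.le⟩, ?_⟩
    intro h
    have : α ∈ S := h
    rw [hSIoo] at this
    exact lt_irrefl α this.1
  have hbfr : f β ∈ frontier Ω := by
    rw [hfr]
    refine ⟨hfmem β ⟨hαβ.le, le_refl _⟩, ?_⟩
    intro h
    have : β ∈ S := h
    rw [hSIoo] at this
    exact lt_irrefl β this.2
  have hfinj : Function.Injective f := by
    intro s t hst
    simp only [hf, add_left_inj] at hst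
    exact smul_left_injective ℝ hyx hst
  have hspan : ∀ t : ℝ, f t ∈ affineSpan ℝ ({x, y} : Set E) := by
    intro t
    have := smul_vsub_vadd_mem_affineSpan_pair t x y
    simpa [hf, vsub_eq_sub, vadd_eq_add] using this
  refine ⟨f α, f β, fun h => hαβ.ne (hfinj h), hafr, hbfr, hspan α, hspan β, ?_, ?_, ?_⟩
  · -- x ∈ openSegment ℝ (f α) y
    have hα0 : α < 0 := h0mem.1
    have h1α : (0:ℝ) < 1 - α := by linarith
    have h1α' : (1:ℝ) - α ≠ 0 := ne_of_gt h1α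
    refine ⟨1/(1-α), -α/(1-α), div_pos one_pos h1α, div_pos (by linarith) h1α, by field_simp; ring, ?_⟩
    simp only [hf]
    match_scalars <;> field_simp <;> ring
  · -- y ∈ openSegment ℝ x (f β)
    have hβ1 : (1:ℝ) < β := h1mem.2
    have hβ0 : (0:ℝ) < β := h0mem.2
    refine ⟨1 - 1/β, 1/β, by rw [sub_pos, div_lt_one hβ0]; exact hβ1, by positivity, by ring, ?_⟩
    simp only [hf]
    match_scalars <;> field_simp <;> ring
  · -- uniqueness
    intro c hcfr hcspan
    -- extract parameter t with c = f t
    have hdir : c - x ∈ (affineSpan ℝ ({x, y} : Set E)).direction := by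
      have := AffineSubspace.vsub_mem_direction hcspan (left_mem_affineSpan_pair ℝ x y)
      simpa using this
    rw [direction_affineSpan, vectorSpan_pair] at hdir
    obtain ⟨t, ht⟩ := Submodule.mem_span_singleton.mp hdir
    set s := -t with hsdef
    have hcx : c - x = s • (y - x) := by
      rw [hsdef, neg_smul, ← smul_neg, neg_sub]
      simpa [vsub_eq_sub] using ht.symm
    have hct : c = f s := by
      simp only [hf]
      rw [← hcx]; abel
    -- points on segment from x to c are in Ω
    have hcl : c ∈ closure Ω := hfr ▸ hcfr |>.1
    have hcnot : c ∉ Ω := (hfr ▸ hcfr).2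
    have hseg : ∀ u : ℝ, u ∈ Ioo (0:ℝ) 1 → u * s ∈ S := by
      intro u hu
      have hxint : x ∈ interior Ω := by rw [hop.interior_eq]; exact hx
      have hsub := hconv.openSegment_interior_closure_subset_interior hxint hcl
      have hmem : (1 - u) • x + u • c ∈ openSegment ℝ x c :=
        ⟨1 - u, u, by linarith [hu.1, hu.2], hu.1, by ring, rfl⟩
      have := hsub hmem
      rw [hop.interior_eq] at this
      have heq : (1 - u) • x + u • c = f (u * s) := by
        have : c = s • (y - x) + x := by rw [← hcx]; abel
        rw [this, hf]
        simp only [smul_add, smul_smul, sub_smul, one_smul]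
        abel
      rw [heq] at this
      exact this
    -- s ∈ Icc α β by taking limits u → 1⁻
    have htend : Tendsto (fun u : ℝ => u * s) (nhdsWithin 1 (Iio 1)) (nhds s) := by
      have : Tendsto (fun u : ℝ => u * s) (nhds 1) (nhds (1 * s)) :=
        (continuous_id.mul continuous_const).tendsto 1
      rw [one_mul] at this
      exact this.mono_left nhdsWithin_le_nhds
    have hev : ∀ᶠ u in nhdsWithin (1:ℝ) (Iio 1), u ∈ Ioo (0:ℝ) 1 :=
      Ioo_mem_nhdsLT_of_mem ⟨zero_lt_one, le_refl _⟩
    have hsle : s ≤ β := le_of_tendsto htend (hev.mono fun u hu => (hSIoo ▸ hseg u hu).2.le)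
    have hsge : α ≤ s := ge_of_tendsto htend (hev.mono fun u hu => (hSIoo ▸ hseg u hu).1.le)
    have hsnot : s ∉ Ioo α β := fun h => hcnot (hct ▸ (hSIoo ▸ h : s ∈ S))
    rcases hsge.eq_or_lt with h1 | h1
    · left; rw [hct, ← h1]
    · rcases hsle.lt_or_eq with h2 | h2
      · exact absurd ⟨h1, h2⟩ hsnot
      · right; rw [hct, h2]
end

section
/- The Hilbert distance d_Ω is a metric on Ω: d_Ω(x,y) ≥ 0 with equality if and only if x = y, d_Ω(x,y) = d_Ω(y,x), and d_Ω(x,z) ≤ d_Ω(x,y) + d_Ω(y,z) for all x, y, z ∈ Ω. -/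
open Set

/-- The defining property of the Hilbert distance on a convex domain `Ω`:
`dΩ x x = 0`, and for distinct `x, y ∈ Ω` the line through `x` and `y` meets
`frontier Ω` in two points `a, b`, labeled so that `x` lies between `a` and `y`
and `y` lies between `x` and `b`, and
`dΩ x y = (1/2) · log((‖a−y‖·‖b−x‖)/(‖a−x‖·‖b−y‖))`. -/
def IsHilbertDist {E : Type*} [NormedAddCommGroup E] [NormedSpace ℝ E]
    (Ω : Set E) (dΩ : E → E → ℝ) : Prop :=
  (∀ x, dΩ x x = 0) ∧
  ∀ x ∈ Ω, ∀ y ∈ Ω, x ≠ y →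
    ∃ a b : E, a ∈ frontier Ω ∧ b ∈ frontier Ω ∧
      x ∈ openSegment ℝ a y ∧ y ∈ openSegment ℝ x b ∧
      dΩ x y = (1/2) * Real.log ((‖a - y‖ * ‖b - x‖) / (‖a - x‖ * ‖b - y‖))

section HilbertAux
variable {E : Type*} [NormedAddCommGroup E] [NormedSpace ℝ E]

private lemma hseg_vec {x y b : E} (h : y ∈ openSegment ℝ x b) :
    ∃ v : ℝ, 0 < v ∧ v < 1 ∧ y - x = v • (b - x) ∧ b - y = (1 - v) • (b - x) := by
  obtain ⟨u, v, hu, hv, huv, rfl⟩ := h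
  have hu' : u = 1 - v := by linarith
  subst hu'
  exact ⟨v, hv, by linarith, by module, by module⟩

private lemma hfront_notmem {Ω : Set E} (hop : IsOpen Ω) {b : E}
    (hb : b ∈ frontier Ω) : b ∉ Ω := by
  rw [hop.frontier_eq] at hb; exact hb.2

private lemma hnorm_pos {Ω : Set E} (hop : IsOpen Ω) {b x : E}
    (hb : b ∈ frontier Ω) (hx : x ∈ Ω) : 0 < ‖b - x‖ := by
  rw [norm_pos_iff, sub_ne_zero]
  rintro rfl; exact hfront_notmem hop hb hx

private lemma hno_mid {Ω : Set E} (hop : IsOpen Ω) (hconv : Convex ℝ Ω)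
    {x b b' : E} (hx : x ∈ Ω) (hb : b ∈ frontier Ω) (hb' : b' ∈ frontier Ω)
    {c : ℝ} (hc0 : 0 < c) (hc1 : c < 1) (heq : b - x = c • (b' - x)) : False := by
  have hbeq : b = c • (b' - x) + x := sub_eq_iff_eq_add.mp heq
  have hmem : b ∈ openSegment ℝ x b' :=
    ⟨1 - c, c, by linarith, hc0, by ring, by rw [hbeq]; module⟩
  have hbi : b ∈ interior Ω :=
    hconv.openSegment_interior_closure_subset_interior
      (by rwa [hop.interior_eq]) hb'.1 hmem
  rw [hop.interior_eq] at hbi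
  exact hfront_notmem hop hb hbi

private lemma hfrontier_unique {Ω : Set E} (hop : IsOpen Ω) (hconv : Convex ℝ Ω)
    {x y b b' : E} (hx : x ∈ Ω)
    (hb : b ∈ frontier Ω) (hb' : b' ∈ frontier Ω)
    (h1 : y ∈ openSegment ℝ x b) (h2 : y ∈ openSegment ℝ x b') : b = b' := by
  obtain ⟨v, hv0, hv1, hyv, -⟩ := hseg_vec h1
  obtain ⟨w, hw0, hw1, hyw, -⟩ := hseg_vec h2
  have hbx : b - x = v⁻¹ • (y - x) := by
    rw [hyv, smul_smul, inv_mul_cancel₀ hv0.ne', one_smul]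
  have hbx' : b' - x = w⁻¹ • (y - x) := by
    rw [hyw, smul_smul, inv_mul_cancel₀ hw0.ne', one_smul]
  rcases lt_trichotomy v w with h | h | h
  · exact (hno_mid hop hconv hx hb' hb (div_pos hv0 hw0) ((div_lt_one hw0).2 h)
      (by rw [hbx', hyv, smul_smul, div_eq_inv_mul])).elim
  · have : b - x = b' - x := by rw [hbx, hbx', h]
    exact sub_left_injective this
  · exact (hno_mid hop hconv hx hb hb' (div_pos hw0 hv0) ((div_lt_one hv0).2 h)
      (by rw [hbx, hyw, smul_smul, div_eq_inv_mul])).elim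

private lemma hlt_norm {a x y : E} (h : x ∈ openSegment ℝ a y) (hay : a ≠ y) :
    ‖a - x‖ < ‖a - y‖ := by
  obtain ⟨v, hv0, hv1, hxv, -⟩ := hseg_vec h
  have h1 : ‖x - a‖ = v * ‖y - a‖ := by
    rw [hxv, norm_smul, Real.norm_of_nonneg hv0.le]
  have h2 : 0 < ‖y - a‖ := by
    rw [norm_pos_iff, sub_ne_zero]; exact fun h => hay h.symm
  rw [norm_sub_rev a x, norm_sub_rev a y, h1]
  nlinarith

private lemma hfunk_bound {x y b : E} (hy : y ∈ openSegment ℝ x b)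
    (f : E →L[ℝ] ℝ) (c : ℝ) (hfb : f b ≤ c) :
    (c - f x) * ‖b - y‖ ≤ (c - f y) * ‖b - x‖ := by
  obtain ⟨v, hv0, hv1, hyv, hby⟩ := hseg_vec hy
  have hnorm : ‖b - y‖ = (1 - v) * ‖b - x‖ := by
    rw [hby, norm_smul, Real.norm_of_nonneg (by linarith)]
  have hfy : f y - f x = v * (f b - f x) := by
    have := congrArg f hyv
    simpa [map_sub, map_smul, smul_eq_mul] using this
  rw [hnorm]
  have hfy' : (f y - f x) * ‖b - x‖ = v * (f b - f x) * ‖b - x‖ := by rw [hfy]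
  nlinarith [mul_nonneg (mul_nonneg hv0.le (sub_nonneg.2 hfb)) (norm_nonneg (b - x))]

private lemma hfunk_eq {x y b : E} (hy : y ∈ openSegment ℝ x b)
    (f : E →L[ℝ] ℝ) {c : ℝ} (hfb : f b = c) :
    (c - f x) * ‖b - y‖ = (c - f y) * ‖b - x‖ := by
  obtain ⟨v, hv0, hv1, hyv, hby⟩ := hseg_vec hy
  have hnorm : ‖b - y‖ = (1 - v) * ‖b - x‖ := by
    rw [hby, norm_smul, Real.norm_of_nonneg (by linarith)]
  have hfy : f y - f x = v * (f b - f x) := by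
    have := congrArg f hyv
    simpa [map_sub, map_smul, smul_eq_mul] using this
  rw [hnorm, hfb] at *
  nlinarith [norm_nonneg (b - x)]

private lemma hsupport {Ω : Set E} (hop : IsOpen Ω) (hconv : Convex ℝ Ω) {b : E}
    (hb : b ∈ frontier Ω) :
    ∃ f : E →L[ℝ] ℝ, (∀ z ∈ Ω, f z < f b) ∧ ∀ z ∈ closure Ω, f z ≤ f b := by
  obtain ⟨f, hf⟩ := geometric_hahn_banach_open_point hconv hop (hfront_notmem hop hb)
  refine ⟨f, hf, fun z hz => ?_⟩
  have hsub : Ω ⊆ f ⁻¹' (Iic (f b)) := fun w hw => (hf w hw).le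
  exact closure_minimal hsub (isClosed_Iic.preimage f.continuous) hz

/-- The key Funk-type inequality:
`‖b−x‖/‖b−z‖ ≤ (‖e−x‖/‖e−y‖) · (‖q−y‖/‖q−z‖)` in multiplied-out form. -/
private lemma hkey {Ω : Set E} (hop : IsOpen Ω) (hconv : Convex ℝ Ω)
    {x y z b e q : E} (hx : x ∈ Ω) (hy : y ∈ Ω) (hz : z ∈ Ω)
    (hb : b ∈ frontier Ω) (he : e ∈ frontier Ω) (hq : q ∈ frontier Ω)
    (hzb : z ∈ openSegment ℝ x b) (hye : y ∈ openSegment ℝ x e)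
    (hzq : z ∈ openSegment ℝ y q) :
    ‖b - x‖ * (‖e - y‖ * ‖q - z‖) ≤ ‖b - z‖ * (‖e - x‖ * ‖q - y‖) := by
  obtain ⟨f, hfΩ, hfcl⟩ := hsupport hop hconv hb
  set c := f b with hc
  have hφx : 0 < c - f x := sub_pos.2 (hfΩ x hx)
  have hφy : 0 < c - f y := sub_pos.2 (hfΩ y hy)
  have hφz : 0 < c - f z := sub_pos.2 (hfΩ z hz)
  have h1 : (c - f x) * ‖b - z‖ = (c - f z) * ‖b - x‖ := hfunk_eq hzb f rfl
  have h2 : (c - f x) * ‖e - y‖ ≤ (c - f y) * ‖e - x‖ :=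
    hfunk_bound hye f c (hfcl e he.1)
  have h3 : (c - f y) * ‖q - z‖ ≤ (c - f z) * ‖q - y‖ :=
    hfunk_bound hzq f c (hfcl q hq.1)
  have h23 : ((c - f x) * ‖e - y‖) * ((c - f y) * ‖q - z‖) ≤
      ((c - f y) * ‖e - x‖) * ((c - f z) * ‖q - y‖) :=
    mul_le_mul h2 h3 (by positivity) (by positivity)
  have hK : (c - f x) * (‖e - y‖ * ‖q - z‖) ≤ (c - f z) * (‖e - x‖ * ‖q - y‖) := by
    have h23' : (c - f y) * ((c - f x) * (‖e - y‖ * ‖q - z‖)) ≤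
        (c - f y) * ((c - f z) * (‖e - x‖ * ‖q - y‖)) := by
      ring_nf at h23 ⊢; linarith
    exact le_of_mul_le_mul_left h23' hφy
  have hG : (c - f z) * (‖b - x‖ * (‖e - y‖ * ‖q - z‖)) ≤
      (c - f z) * (‖b - z‖ * (‖e - x‖ * ‖q - y‖)) := by
    have hKb := mul_le_mul_of_nonneg_left hK (norm_nonneg (b - z))
    have h1' : ((c - f x) * ‖b - z‖) * (‖e - y‖ * ‖q - z‖) =
        ((c - f z) * ‖b - x‖) * (‖e - y‖ * ‖q - z‖) := by rw [h1]
    ring_nf at hKb h1' ⊢; linarith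
  exact le_of_mul_le_mul_left hG hφz

end HilbertAux

/-- The Hilbert distance is a metric on `Ω`: nonnegative, vanishing exactly on the
diagonal, symmetric, and satisfying the triangle inequality. -/
theorem hilbert_dist_is_metric
    {E : Type*} [NormedAddCommGroup E] [NormedSpace ℝ E] [FiniteDimensional ℝ E]
    (Ω : Set E) (hne : Ω.Nonempty) (hbdd : Bornology.IsBounded Ω)
    (hop : IsOpen Ω) (hconv : Convex ℝ Ω)
    (dΩ : E → E → ℝ) (hd : IsHilbertDist Ω dΩ) :
    (∀ x ∈ Ω, ∀ y ∈ Ω, 0 ≤ dΩ x y ∧ (dΩ x y = 0 ↔ x = y)) ∧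
    (∀ x ∈ Ω, ∀ y ∈ Ω, dΩ x y = dΩ y x) ∧
    (∀ x ∈ Ω, ∀ y ∈ Ω, ∀ z ∈ Ω, dΩ x z ≤ dΩ x y + dΩ y z) := by
  obtain ⟨hdiag, hpair⟩ := hd
  -- strict positivity off the diagonal
  have hposd : ∀ x ∈ Ω, ∀ y ∈ Ω, x ≠ y → 0 < dΩ x y := by
    intro x hx y hy hxy
    obtain ⟨a, b, ha, hb, hxa, hyb, hform⟩ := hpair x hx y hy hxy
    have hax : 0 < ‖a - x‖ := hnorm_pos hop ha hx
    have hby : 0 < ‖b - y‖ := hnorm_pos hop hb hy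
    have h1 : ‖a - x‖ < ‖a - y‖ := hlt_norm hxa (fun h => hfront_notmem hop ha (h ▸ hy))
    have h2 : ‖b - y‖ < ‖b - x‖ := by
      rw [openSegment_symm] at hyb
      exact hlt_norm hyb (fun h => hfront_notmem hop hb (h ▸ hx))
    have hR : 1 < (‖a - y‖ * ‖b - x‖) / (‖a - x‖ * ‖b - y‖) := by
      rw [lt_div_iff₀ (by positivity), one_mul]
      nlinarith
    rw [hform]
    have := Real.log_pos hR
    linarith
  have hnn : ∀ x ∈ Ω, ∀ y ∈ Ω, 0 ≤ dΩ x y := by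
    intro x hx y hy
    rcases eq_or_ne x y with rfl | hxy
    · rw [hdiag]
    · exact (hposd x hx y hy hxy).le
  refine ⟨?_, ?_, ?_⟩
  · intro x hx y hy
    refine ⟨hnn x hx y hy, ?_, fun h => h ▸ hdiag x⟩
    intro h0
    by_contra hxy
    exact absurd h0 (hposd x hx y hy hxy).ne'
  · -- symmetry
    intro x hx y hy
    rcases eq_or_ne x y with rfl | hxy
    · rfl
    obtain ⟨a, b, ha, hb, hxa, hyb, hform⟩ := hpair x hx y hy hxy
    obtain ⟨a', b', ha', hb', hya', hxb', hform'⟩ := hpair y hy x hx hxy.symm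
    rw [openSegment_symm] at hya'
    have hab' : a = b' := hfrontier_unique hop hconv hy ha hb'
      (by rwa [openSegment_symm] at hxa) hxb'
    have hba' : b = a' := hfrontier_unique hop hconv hx hb ha' hyb hya'
    rw [hform, hform', ← hab', ← hba']
    congr 1
    rw [mul_comm ‖b - x‖ ‖a - y‖, mul_comm ‖b - y‖ ‖a - x‖]
  · -- triangle inequality
    intro x hx y hy z hz
    rcases eq_or_ne x y with rfl | hxy
    · rw [hdiag]; linarith
    rcases eq_or_ne y z with rfl | hyz
    · rw [hdiag]; linarith
    rcases eq_or_ne x z with rfl | hxz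
    · rw [hdiag]
      have := hnn x hx y hy
      have := hnn y hy x hx
      linarith
    obtain ⟨a, b, ha, hb, hxa, hzb, hformxz⟩ := hpair x hx z hz hxz
    obtain ⟨c, e, hc, he, hxc, hye, hformxy⟩ := hpair x hx y hy hxy
    obtain ⟨p, q, hp, hq, hyp, hzq, hformyz⟩ := hpair y hy z hz hyz
    -- K1 : ‖b−x‖·‖e−y‖·‖q−z‖ ≤ ‖b−z‖·‖e−x‖·‖q−y‖
    have K1 := hkey hop hconv hx hy hz hb he hq hzb hye hzq
    -- K2 with roles reversed
    rw [openSegment_symm] at hxa hyp hxc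
    have K2 := hkey hop hconv hz hy hx ha hp hc hxa hyp hxc
    -- positivity of all the norms
    have nax : 0 < ‖a - x‖ := hnorm_pos hop ha hx
    have naz : 0 < ‖a - z‖ := hnorm_pos hop ha hz
    have nbx : 0 < ‖b - x‖ := hnorm_pos hop hb hx
    have nbz : 0 < ‖b - z‖ := hnorm_pos hop hb hz
    have ncx : 0 < ‖c - x‖ := hnorm_pos hop hc hx
    have ncy : 0 < ‖c - y‖ := hnorm_pos hop hc hy
    have nex : 0 < ‖e - x‖ := hnorm_pos hop he hx
    have ney : 0 < ‖e - y‖ := hnorm_pos hop he hy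
    have npy : 0 < ‖p - y‖ := hnorm_pos hop hp hy
    have npz : 0 < ‖p - z‖ := hnorm_pos hop hp hz
    have nqy : 0 < ‖q - y‖ := hnorm_pos hop hq hy
    have nqz : 0 < ‖q - z‖ := hnorm_pos hop hq hz
    have hmain : (‖a - z‖ * ‖b - x‖) / (‖a - x‖ * ‖b - z‖) ≤
        ((‖c - y‖ * ‖e - x‖) / (‖c - x‖ * ‖e - y‖)) *
        ((‖p - z‖ * ‖q - y‖) / (‖p - y‖ * ‖q - z‖)) := by
      rw [div_mul_div_comm, div_le_div_iff₀ (by positivity) (by positivity)]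
      have hK12 := mul_le_mul K1 K2 (by positivity) (by positivity)
      ring_nf at hK12 ⊢
      linarith
    have hL : (0:ℝ) < (‖a - z‖ * ‖b - x‖) / (‖a - x‖ * ‖b - z‖) := by positivity
    have hR1 : (0:ℝ) < (‖c - y‖ * ‖e - x‖) / (‖c - x‖ * ‖e - y‖) := by positivity
    have hR2 : (0:ℝ) < (‖p - z‖ * ‖q - y‖) / (‖p - y‖ * ‖q - z‖) := by positivity
    have hlog := Real.log_le_log hL hmain
    rw [Real.log_mul hR1.ne' hR2.ne'] at hlog
    rw [hformxz, hformxy, hformyz]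
    linarith
end

section
/- The metric space (Ω, d_Ω) is complete, and the topology induced by d_Ω on Ω coincides with the subspace topology that Ω inherits from the norm topology of E. -/
open Set Topology Filter

private lemma top_eq_of_subsingleton {α : Type*} [Subsingleton α]
    (t1 t2 : TopologicalSpace α) : t1 = t2 := by
  refine TopologicalSpace.ext ?_
  funext s
  rcases Set.eq_empty_or_nonempty s with rfl | ⟨x, hx⟩
  · exact propext (iff_of_true (@isOpen_empty _ t1) (@isOpen_empty _ t2))
  · have hs : s = Set.univ := Set.eq_univ_of_forall fun y => (Subsingleton.elim x y) ▸ hx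
    rw [hs]
    exact propext (iff_of_true (@isOpen_univ _ t1) (@isOpen_univ _ t2))

/-- Structure lemma: the Hilbert distance formula rewritten in additive form. -/
private lemma hilbert_struct {E : Type*} [NormedAddCommGroup E] [NormedSpace ℝ E]
    {Ω : Set E} (hop : IsOpen Ω) {dΩ : E → E → ℝ} (hd : IsHilbertDist Ω dΩ)
    {x y : E} (hx : x ∈ Ω) (hy : y ∈ Ω) (hxy : x ≠ y) :
    ∃ a b : E, a ∈ frontier Ω ∧ b ∈ frontier Ω ∧ 0 < ‖a - x‖ ∧ 0 < ‖b - y‖ ∧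
      y ∈ openSegment ℝ x b ∧
      dΩ x y = 1/2 * (Real.log (1 + ‖x - y‖ / ‖a - x‖)
        + Real.log (1 + ‖x - y‖ / ‖b - y‖)) := by
  obtain ⟨a, b, haF, hbF, hxs, hys, hfor⟩ := hd.2 x hx y hy hxy
  have haΩ : a ∉ Ω := fun h => haF.2 (by rw [hop.interior_eq]; exact h)
  have hbΩ : b ∉ Ω := fun h => hbF.2 (by rw [hop.interior_eq]; exact h)
  have hA : (0:ℝ) < ‖a - x‖ := by
    rw [norm_sub_pos_iff]; exact fun h => haΩ (h ▸ hx)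
  have hB : (0:ℝ) < ‖b - y‖ := by
    rw [norm_sub_pos_iff]; exact fun h => hbΩ (h ▸ hy)
  have hs0 : (0:ℝ) < ‖x - y‖ := by rwa [norm_sub_pos_iff]
  have e1 : ‖a - y‖ = ‖a - x‖ + ‖x - y‖ := by
    have h := dist_add_dist_of_mem_segment (openSegment_subset_segment ℝ a y hxs)
    rw [dist_eq_norm, dist_eq_norm, dist_eq_norm] at h
    linarith
  have e2 : ‖b - x‖ = ‖x - y‖ + ‖b - y‖ := by
    have h := dist_add_dist_of_mem_segment (openSegment_subset_segment ℝ x b hys)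
    rw [dist_eq_norm, dist_eq_norm, dist_eq_norm] at h
    have h1 : ‖y - b‖ = ‖b - y‖ := norm_sub_rev _ _
    have h2 : ‖x - b‖ = ‖b - x‖ := norm_sub_rev _ _
    linarith
  refine ⟨a, b, haF, hbF, hA, hB, hys, ?_⟩
  rw [hfor, e1, e2]
  have key : (‖a - x‖ + ‖x - y‖) * (‖x - y‖ + ‖b - y‖) / (‖a - x‖ * ‖b - y‖)
      = (1 + ‖x - y‖ / ‖a - x‖) * (1 + ‖x - y‖ / ‖b - y‖) := by
    rw [one_add_div hA.ne', one_add_div hB.ne', div_mul_div_comm]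
    congr 1
    ring
  rw [key, Real.log_mul (by positivity) (by positivity)]

/-- Lower bound on the Hilbert distance in terms of a diameter bound. -/
private lemma hilbert_le {E : Type*} [NormedAddCommGroup E] [NormedSpace ℝ E]
    {Ω : Set E} (hop : IsOpen Ω) {dΩ : E → E → ℝ} (hd : IsHilbertDist Ω dΩ)
    {D : ℝ} (hD0 : 0 < D)
    (hD : ∀ p ∈ closure Ω, ∀ q ∈ closure Ω, ‖p - q‖ ≤ D)
    {x y : E} (hx : x ∈ Ω) (hy : y ∈ Ω) :
    Real.log (1 + ‖x - y‖ / D) ≤ dΩ x y := by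
  rcases eq_or_ne x y with rfl | hxy
  · simp [hd.1]
  obtain ⟨a, b, haF, hbF, hA, hB, -, hfor⟩ := hilbert_struct hop hd hx hy hxy
  have hs0 : (0:ℝ) < ‖x - y‖ := by rwa [norm_sub_pos_iff]
  have hAD : ‖a - x‖ ≤ D :=
    hD a (frontier_subset_closure haF) x (subset_closure hx)
  have hBD : ‖b - y‖ ≤ D :=
    hD b (frontier_subset_closure hbF) y (subset_closure hy)
  have h1 : Real.log (1 + ‖x - y‖ / D) ≤ Real.log (1 + ‖x - y‖ / ‖a - x‖) := by
    apply Real.log_le_log (by positivity)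
    have : ‖x - y‖ / D ≤ ‖x - y‖ / ‖a - x‖ := by
      apply div_le_div_of_nonneg_left hs0.le hA hAD
    linarith
  have h2 : Real.log (1 + ‖x - y‖ / D) ≤ Real.log (1 + ‖x - y‖ / ‖b - y‖) := by
    apply Real.log_le_log (by positivity)
    have : ‖x - y‖ / D ≤ ‖x - y‖ / ‖b - y‖ := by
      apply div_le_div_of_nonneg_left hs0.le hB hBD
    linarith
  rw [hfor]
  linarith

/-- Local upper bound: near a point of `Ω` the Hilbert distance is small. -/
private lemma hilbert_near {E : Type*} [NormedAddCommGroup E] [NormedSpace ℝ E]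
    {Ω : Set E} (hop : IsOpen Ω) {dΩ : E → E → ℝ} (hd : IsHilbertDist Ω dΩ)
    (hF : (frontier Ω).Nonempty)
    {p : E} (hp : p ∈ Ω) {ε : ℝ} (hε : 0 < ε) :
    ∃ δ > 0, ∀ y ∈ Ω, ‖p - y‖ < δ → dΩ p y < ε := by
  set r : ℝ := Metric.infDist p (frontier Ω) with hrdef
  have hr : 0 < r := by
    rw [hrdef]
    refine (isClosed_frontier.notMem_iff_infDist_pos hF).mp ?_
    exact fun h => h.2 (by rw [hop.interior_eq]; exact hp)
  have hexp : (0:ℝ) < Real.exp ε - 1 := by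
    have : (1:ℝ) < Real.exp ε := by
      have := Real.exp_lt_exp.2 hε
      rwa [Real.exp_zero] at this
    linarith
  refine ⟨min (r/2) ((r/2) * (Real.exp ε - 1)), by positivity, ?_⟩
  intro y hy hylt
  have h1 : ‖p - y‖ < r/2 := lt_of_lt_of_le hylt (min_le_left _ _)
  have h2 : ‖p - y‖ < (r/2) * (Real.exp ε - 1) := lt_of_lt_of_le hylt (min_le_right _ _)
  rcases eq_or_ne p y with rfl | hpy
  · rw [hd.1]; exact hε
  obtain ⟨a, b, haF, hbF, hA, hB, -, hfor⟩ := hilbert_struct hop hd hp hy hpy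
  have hs0 : (0:ℝ) < ‖p - y‖ := by rwa [norm_sub_pos_iff]
  -- ‖a - p‖ ≥ r, ‖b - y‖ ≥ r/2
  have hAr : r ≤ ‖a - p‖ := by
    have := Metric.infDist_le_dist_of_mem (x := p) haF
    rwa [dist_eq_norm, norm_sub_rev] at this
  have hBr : r/2 ≤ ‖b - y‖ := by
    have hylow : r - ‖p - y‖ ≤ Metric.infDist y (frontier Ω) := by
      have := Metric.infDist_le_infDist_add_dist (x := p) (y := y) (s := frontier Ω)
      rw [dist_eq_norm] at this
      linarith
    have h5 := Metric.infDist_le_dist_of_mem (x := y) hbF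
    rw [dist_eq_norm, norm_sub_rev] at h5
    linarith
  set T : ℝ := Real.log (1 + ‖p - y‖ / (r/2)) with hTdef
  have hT1 : Real.log (1 + ‖p - y‖ / ‖a - p‖) ≤ T := by
    apply Real.log_le_log (by positivity)
    have : ‖p - y‖ / ‖a - p‖ ≤ ‖p - y‖ / (r/2) := by
      apply div_le_div_of_nonneg_left hs0.le (by positivity)
      linarith
    linarith
  have hT2 : Real.log (1 + ‖p - y‖ / ‖b - y‖) ≤ T := by
    apply Real.log_le_log (by positivity)
    have : ‖p - y‖ / ‖b - y‖ ≤ ‖p - y‖ / (r/2) := by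
      apply div_le_div_of_nonneg_left hs0.le (by positivity) hBr
    linarith
  have hTε : T < ε := by
    rw [hTdef, Real.log_lt_iff_lt_exp (by positivity)]
    have : ‖p - y‖ / (r/2) < Real.exp ε - 1 := by
      rw [div_lt_iff₀ (by positivity)]
      linarith
    linarith
  rw [hfor]
  linarith

/-- The metric space `(Ω, dΩ)` is complete, and the topology induced by `dΩ` on `Ω`
coincides with the subspace topology `Ω` inherits from the norm topology of `E`.
(Formally: any metric-space structure on the subtype `↥Ω` whose distance function is
`dΩ` is complete, and its topology is the subtype topology.) -/
theorem hilbert_metric_complete_and_topology_coincides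
    {E : Type*} [NormedAddCommGroup E] [NormedSpace ℝ E] [FiniteDimensional ℝ E]
    (Ω : Set E) (hne : Ω.Nonempty) (hbdd : Bornology.IsBounded Ω)
    (hop : IsOpen Ω) (hconv : Convex ℝ Ω)
    (dΩ : E → E → ℝ) (hd : IsHilbertDist Ω dΩ)
    (m : MetricSpace ↥Ω) (hm : ∀ p q : ↥Ω, m.dist p q = dΩ (p : E) (q : E)) :
    @CompleteSpace ↥Ω m.toUniformSpace ∧
      m.toUniformSpace.toTopologicalSpace = instTopologicalSpaceSubtype := by
  rcases subsingleton_or_nontrivial E with hE | hE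
  · -- degenerate case: `E` (hence `↥Ω`) is a subsingleton
    constructor
    · refine @Metric.complete_of_cauchySeq_tendsto ↥Ω m.toPseudoMetricSpace ?_
      intro u _
      refine ⟨u 0, ?_⟩
      rw [@Metric.tendsto_atTop ↥Ω ℕ m.toPseudoMetricSpace _ _ u (u 0)]
      intro ε hε
      refine ⟨0, fun n _ => ?_⟩
      have huu : u n = u 0 := Subsingleton.elim _ _
      rw [huu, m.dist_self (u 0)]
      exact hε
    · exact top_eq_of_subsingleton _ _
  -- main case
  -- the diameter bound
  set D : ℝ := Metric.diam Ω + 1 with hDdef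
  have hD0 : 0 < D := by positivity
  have hD : ∀ p ∈ closure Ω, ∀ q ∈ closure Ω, ‖p - q‖ ≤ D := by
    intro p hp q hq
    have h := Metric.dist_le_diam_of_mem hbdd.closure hp hq
    rw [Metric.diam_closure] at h
    rw [← dist_eq_norm]
    linarith
  -- the frontier is nonempty
  have hF : (frontier Ω).Nonempty := by
    by_contra h
    rw [Set.not_nonempty_iff_eq_empty] at h
    have hclopen : IsClopen Ω := isClopen_iff_frontier_eq_empty.mpr h
    rcases isClopen_iff.mp hclopen with h1 | h1
    · exact hne.ne_empty h1
    · exact NormedSpace.unbounded_univ ℝ E (h1 ▸ hbdd)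
  -- symmetry of dΩ on Ω
  have hdsymm : ∀ a b : ↥Ω, dΩ (a : E) (b : E) = dΩ (b : E) (a : E) := by
    intro a b
    have h1 := hm a b
    have h2 := hm b a
    have h3 : m.dist a b = m.dist b a := m.dist_comm a b
    linarith
  -- `dΩ`-small implies norm-small
  have hsmall : ∀ ε : ℝ, 0 < ε → ∀ a b : ↥Ω,
      dΩ (a : E) (b : E) < Real.log (1 + ε / D) → ‖(a : E) - (b : E)‖ < ε := by
    intro ε hε a b hab
    have hlow := hilbert_le hop hd hD0 hD a.2 b.2
    have h1 : Real.log (1 + ‖(a:E) - (b:E)‖ / D) < Real.log (1 + ε / D) :=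
      lt_of_le_of_lt hlow hab
    have h2 : 1 + ‖(a:E) - (b:E)‖ / D < 1 + ε / D := by
      rwa [Real.log_lt_log_iff (by positivity) (by positivity)] at h1
    have h3 : ‖(a:E) - (b:E)‖ / D < ε / D := by linarith
    calc ‖(a:E) - (b:E)‖ = (‖(a:E) - (b:E)‖ / D) * D := by field_simp
      _ < (ε / D) * D := mul_lt_mul_of_pos_right h3 hD0
      _ = ε := by field_simp
  have hlogpos : ∀ ε : ℝ, 0 < ε → 0 < Real.log (1 + ε / D) := by
    intro ε hε
    apply Real.log_pos
    have : 0 < ε / D := by positivity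
    linarith
  -- Topology coincidence
  have htop : m.toUniformSpace.toTopologicalSpace = instTopologicalSpaceSubtype := by
    refine TopologicalSpace.ext_nhds fun p => ?_
    rw [nhds_subtype]
    have hb1 := @Metric.nhds_basis_ball ↥Ω m.toPseudoMetricSpace p
    refine hb1.ext ((Metric.nhds_basis_ball (x := (p : E))).comap _) ?_ ?_
    · -- m-balls contain norm-balls
      intro ε hε
      obtain ⟨δ, hδ, hδ'⟩ := hilbert_near hop hd hF p.2 hε
      refine ⟨δ, hδ, fun q hq => ?_⟩
      rw [Set.mem_preimage] at hq
      have hq' : ‖(p : E) - (q : E)‖ < δ := by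
        rw [norm_sub_rev, ← dist_eq_norm]
        exact Metric.mem_ball.mp hq
      show m.dist q p < ε
      rw [hm q p, hdsymm q p]
      exact hδ' _ q.2 hq'
    · -- norm-balls contain m-balls
      intro ε hε
      refine ⟨Real.log (1 + ε / D), hlogpos ε hε, fun q hq => ?_⟩
      have hq' : m.dist q p < Real.log (1 + ε / D) := hq
      rw [hm q p] at hq'
      rw [Set.mem_preimage, Metric.mem_ball, dist_eq_norm]
      exact hsmall ε hε q p hq'
  refine ⟨?_, htop⟩
  -- Completeness
  refine @Metric.complete_of_cauchySeq_tendsto ↥Ω m.toPseudoMetricSpace ?_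
  intro u hu
  -- the coerced sequence is Cauchy in `E`
  have hvC : CauchySeq (fun n => (u n : E)) := by
    rw [Metric.cauchySeq_iff]
    intro ε hε
    obtain ⟨N, hN⟩ := (@Metric.cauchySeq_iff ↥Ω ℕ m.toPseudoMetricSpace _ _ u).mp hu
      (Real.log (1 + ε / D)) (hlogpos ε hε)
    refine ⟨N, fun i hi j hj => ?_⟩
    have h1 := hN i hi j hj
    rw [hm] at h1
    have := hsmall ε hε (u i) (u j) h1
    rw [dist_eq_norm]
    exact this
  obtain ⟨z, hv⟩ := cauchySeq_tendsto_of_complete hvC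
  have hzcl : z ∈ closure Ω :=
    mem_closure_of_tendsto hv (Filter.Eventually.of_forall fun n => (u n).2)
  -- the limit lies in Ω
  have hz : z ∈ Ω := by
    by_contra hzΩ
    have hx0 : (u 0 : E) ∈ Ω := (u 0).2
    have hzx0 : (u 0 : E) ≠ z := fun h => hzΩ (h ▸ hx0)
    have hc : 0 < ‖(u 0 : E) - z‖ := by rw [norm_sub_pos_iff]; exact hzx0
    obtain ⟨R, hR0, hR⟩ := @cauchySeq_bdd ↥Ω m.toPseudoMetricSpace u hu
    have hexpR : (0:ℝ) < Real.exp (2 * R) - 1 := by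
      have : (1:ℝ) < Real.exp (2 * R) := by
        have := Real.exp_lt_exp.2 (by linarith : (0:ℝ) < 2 * R)
        rwa [Real.exp_zero] at this
      linarith
    set c : ℝ := ‖(u 0 : E) - z‖ with hcdef
    set ε0 : ℝ := (c / 2) / (Real.exp (2 * R) - 1) with hε0def
    have hε00 : 0 < ε0 := by positivity
    -- eventually ‖u 0 - u n‖ ≥ c/2
    have htend : Filter.Tendsto (fun n => ‖(u 0 : E) - (u n : E)‖)
        Filter.atTop (𝓝 c) := by
      have h1 : Filter.Tendsto (fun n => (u 0 : E) - (u n : E))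
          Filter.atTop (𝓝 ((u 0 : E) - z)) := tendsto_const_nhds.sub hv
      exact h1.norm
    obtain ⟨n0, hn0⟩ :=
      Filter.eventually_atTop.mp (htend.eventually_const_le (by linarith : c / 2 < c))
    -- key structural fact for n ≥ n0
    have key : ∀ n, n0 ≤ n → ∃ b t : _, b ∈ closure Ω ∧ 0 < t ∧ t < 1 ∧
        (u n : E) - (u 0 : E) = t • (b - (u 0 : E)) ∧
        ε0 < (1 - t) * ‖b - (u 0 : E)‖ := by
      intro n hn
      have hsn : c / 2 ≤ ‖(u 0 : E) - (u n : E)‖ := hn0 n hn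
      have hvx0 : (u 0 : E) ≠ (u n : E) := by
        intro h
        rw [← h] at hsn
        simp only [sub_self, norm_zero] at hsn
        linarith
      obtain ⟨a, b, haF, hbF, hA, hB, hseg, hfor⟩ :=
        hilbert_struct hop hd hx0 (u n).2 hvx0
      -- dΩ (u 0) (u n) < R
      have hdR : dΩ (u 0 : E) (u n : E) < R := by
        have h := hR 0 n
        rwa [hm] at h
      have hlog1 : (0:ℝ) ≤ Real.log (1 + ‖(u 0 : E) - (u n : E)‖ / ‖a - (u 0 : E)‖) := by
        apply Real.log_nonneg
        have : (0:ℝ) ≤ ‖(u 0 : E) - (u n : E)‖ / ‖a - (u 0 : E)‖ := by positivity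
        linarith
      have hlog2 : Real.log (1 + ‖(u 0 : E) - (u n : E)‖ / ‖b - (u n : E)‖) < 2 * R := by
        rw [hfor] at hdR
        linarith
      have hBε : ε0 < ‖b - (u n : E)‖ := by
        rw [Real.log_lt_iff_lt_exp (by positivity)] at hlog2
        have h1 : ‖(u 0 : E) - (u n : E)‖ / ‖b - (u n : E)‖ < Real.exp (2 * R) - 1 := by
          linarith
        rw [div_lt_iff₀ hB] at h1
        have h2 : ‖(u 0 : E) - (u n : E)‖ / (Real.exp (2 * R) - 1) < ‖b - (u n : E)‖ := by
          rw [div_lt_iff₀ hexpR]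
          linarith
        have h3 : ε0 ≤ ‖(u 0 : E) - (u n : E)‖ / (Real.exp (2 * R) - 1) := by
          rw [hε0def]
          gcongr
        linarith
      -- extract segment coefficients
      obtain ⟨s, t, hs0, ht0, hst, heq⟩ := hseg
      have hseq : s = 1 - t := by linarith
      rw [hseq] at heq
      have h1 : b - (u n : E) = (1 - t) • (b - (u 0 : E)) := by
        rw [← heq]
        module
      have h2 : (u n : E) - (u 0 : E) = t • (b - (u 0 : E)) := by
        rw [← heq]
        module
      have ht1 : t < 1 := by linarith
      have hnorm : ‖b - (u n : E)‖ = (1 - t) * ‖b - (u 0 : E)‖ := by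
        rw [h1, norm_smul, Real.norm_eq_abs, abs_of_nonneg (by linarith)]
      refine ⟨b, t, frontier_subset_closure hbF, ht0, ht1, h2, ?_⟩
      rw [← hnorm]
      exact hBε
    -- `ε0 < D`
    obtain ⟨b0, t0, hb0, ht00, ht01, -, hb0ε⟩ := key n0 le_rfl
    have hb0D : ‖b0 - (u 0 : E)‖ ≤ D := hD b0 hb0 _ (subset_closure hx0)
    have hε0D : ε0 < D := by
      have h1 : (1 - t0) * ‖b0 - (u 0 : E)‖ ≤ 1 * D :=
        mul_le_mul (by linarith) hb0D (norm_nonneg _) (by norm_num)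
      linarith
    set lam : ℝ := 1 - ε0 / D with hlamdef
    have hlam0 : 0 < lam := by
      rw [hlamdef]
      have : ε0 / D < 1 := by rwa [div_lt_one hD0]
      linarith
    have hlam1 : lam < 1 := by
      rw [hlamdef]
      have : 0 < ε0 / D := by positivity
      linarith
    -- the auxiliary sequence
    have hWmem : ∀ n, n0 ≤ n →
        (u 0 : E) + lam⁻¹ • ((u n : E) - (u 0 : E)) ∈ closure Ω := by
      intro n hn
      obtain ⟨b, t, hbcl, ht0, ht1, hvt, hbt⟩ := key n hn
      have hbD : ‖b - (u 0 : E)‖ ≤ D := hD b hbcl _ (subset_closure hx0)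
      -- t < lam
      have htlam : t < lam := by
        rw [hlamdef]
        have h2 : (1 - t) * ‖b - (u 0 : E)‖ ≤ (1 - t) * D :=
          mul_le_mul_of_nonneg_left hbD (by linarith)
        have h3 : ε0 < (1 - t) * D := by linarith
        have h4 : ε0 / D < 1 - t := by
          rw [div_lt_iff₀ hD0]
          linarith
        linarith
      have hcoef0 : 0 < t / lam := by positivity
      have hcoef1 : t / lam < 1 := by
        rw [div_lt_one hlam0]
        exact htlam
      have hWn : (u 0 : E) + lam⁻¹ • ((u n : E) - (u 0 : E))
          = (1 - t / lam) • (u 0 : E) + (t / lam) • b := by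
        have hlamne : lam ≠ 0 := hlam0.ne'
        rw [hvt]
        match_scalars <;> field_simp <;> ring
      rw [hWn]
      exact hconv.closure (subset_closure hx0) hbcl (by linarith) hcoef0.le (by ring)
    have hWtend : Filter.Tendsto (fun n => (u 0 : E) + lam⁻¹ • ((u n : E) - (u 0 : E)))
        Filter.atTop (𝓝 ((u 0 : E) + lam⁻¹ • (z - (u 0 : E)))) := by
      apply Filter.Tendsto.const_add
      apply Filter.Tendsto.const_smul
      exact hv.sub tendsto_const_nhds
    have hw : (u 0 : E) + lam⁻¹ • (z - (u 0 : E)) ∈ closure Ω := by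
      refine isClosed_closure.mem_of_tendsto hWtend ?_
      exact Filter.eventually_atTop.mpr ⟨n0, hWmem⟩
    have hzeq : z = (1 - lam) • (u 0 : E)
        + lam • ((u 0 : E) + lam⁻¹ • (z - (u 0 : E))) := by
      have hlamne : lam ≠ 0 := hlam0.ne'
      match_scalars <;> field_simp <;> ring
    have hzint : z ∈ interior Ω := by
      rw [hzeq]
      exact hconv.combo_interior_closure_mem_interior
        (by rw [hop.interior_eq]; exact hx0) hw (by linarith) hlam0.le (by ring)
    rw [hop.interior_eq] at hzint
    exact hzΩ hzint
  -- conclude: `u` converges to `⟨z, hz⟩` in the metric `m`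
  refine ⟨⟨z, hz⟩, ?_⟩
  rw [@Metric.tendsto_atTop ↥Ω ℕ m.toPseudoMetricSpace _ _ u ⟨z, hz⟩]
  intro ε hε
  obtain ⟨δ, hδ, hδ'⟩ := hilbert_near hop hd hF hz hε
  obtain ⟨N, hN⟩ := (Metric.tendsto_atTop).mp hv δ hδ
  refine ⟨N, fun n hn => ?_⟩
  have h1 : ‖z - (u n : E)‖ < δ := by
    have := hN n hn
    rw [dist_eq_norm, norm_sub_rev] at this
    exact this
  have h2 : dΩ z (u n : E) < ε := hδ' _ (u n).2 h1
  have h3 : m.dist (u n) (⟨z, hz⟩ : ↥Ω) = dΩ z (u n : E) := by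
    rw [hm]
    exact hdsymm (u n) ⟨z, hz⟩
  rw [h3]
  exact h2
end

section
/- Affine segments are geodesics for the Hilbert metric: if x, y, z ∈ Ω are collinear and y lies in the closed segment from x to z, then d_Ω(x,z) = d_Ω(x,y) + d_Ω(y,z). -/
open Set

/-- On a ray from an interior point, an open convex set has at most one frontier point. -/
private lemma ray_eq {E : Type*} [NormedAddCommGroup E] [NormedSpace ℝ E]
    {Ω : Set E} (hop : IsOpen Ω) (hconv : Convex ℝ Ω)
    {p v A B : E} (hp : p ∈ Ω) {s t : ℝ} (hs : 0 < s) (ht : 0 < t)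
    (hA : A = p + s • v) (hB : B = p + t • v)
    (hAf : A ∈ frontier Ω) (hBf : B ∈ frontier Ω) : A = B := by
  have key : ∀ (C D : E) (c d : ℝ), 0 < c → c < d →
      C = p + c • v → D = p + d • v → C ∈ frontier Ω → D ∈ frontier Ω → False := by
    intro C D c d hc hcd hC hD hCf hDf
    have hd0 : (0:ℝ) < d := hc.trans hcd
    have hcomb : (1 - c / d) • p + (c / d) • D = C := by
      rw [hC, hD]
      have hmd : (c / d) * d = c := div_mul_cancel₀ _ hd0.ne'
      rw [smul_add, smul_smul, hmd]
      module
    have hint : C ∈ interior Ω := by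
      rw [← hcomb]
      refine hconv.combo_interior_closure_mem_interior
        (by rwa [hop.interior_eq]) (frontier_subset_closure hDf) ?_ ?_ (by ring)
      · have : c / d < 1 := (div_lt_one hd0).mpr hcd
        linarith
      · exact (div_pos hc hd0).le
    rw [hop.frontier_eq] at hCf
    exact hCf.2 (interior_subset hint)
  rcases lt_trichotomy s t with h | h | h
  · exact (key A B s t hs h hA hB hAf hBf).elim
  · rw [hA, hB, h]
  · exact (key B A t s ht h hB hA hBf hAf).elim

private lemma exist1 {E : Type*} [NormedAddCommGroup E] [NormedSpace ℝ E]
    {A B X : E} (h : X ∈ openSegment ℝ A B) :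
    ∃ s : ℝ, 0 < s ∧ A = X + s • (X - B) := by
  obtain ⟨u, u', hu, hu', huu, hcomb⟩ := h
  have hueq : u' = 1 - u := by linarith
  subst hueq
  refine ⟨(1 - u) / u, div_pos hu' hu, ?_⟩
  apply smul_right_injective E hu.ne'
  show u • A = u • (X + ((1 - u) / u) • (X - B))
  have hmd : u * ((1 - u) / u) = 1 - u := by field_simp
  rw [smul_add, smul_smul, hmd]
  linear_combination (norm := module) hcomb

private lemma exist2 {E : Type*} [NormedAddCommGroup E] [NormedSpace ℝ E]
    {X B Y : E} (h : Y ∈ openSegment ℝ X B) :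
    ∃ s : ℝ, 0 < s ∧ B = X + s • (Y - X) := by
  obtain ⟨u, u', hu, hu', huu, hcomb⟩ := h
  have hueq : u = 1 - u' := by linarith
  subst hueq
  refine ⟨1 / u', by positivity, ?_⟩
  apply smul_right_injective E hu'.ne'
  show u' • B = u' • (X + (1 / u') • (Y - X))
  have hmd : u' * (1 / u') = 1 := by field_simp
  rw [smul_add, smul_smul, hmd, one_smul]
  linear_combination (norm := module) hcomb

private lemma exist3 {E : Type*} [NormedAddCommGroup E] [NormedSpace ℝ E]
    {X Z Y : E} (h : Y ∈ openSegment ℝ X Z) :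
    ∃ t : ℝ, 0 < t ∧ t < 1 ∧ Y = X + t • (Z - X) := by
  obtain ⟨u, u', hu, hu', huu, hcomb⟩ := h
  have hueq : u = 1 - u' := by linarith
  subst hueq
  refine ⟨u', hu', by linarith, ?_⟩
  linear_combination (norm := module) hcomb.symm

/-- Affine segments are geodesics for the Hilbert metric: if `x, y, z ∈ Ω` are
collinear with `y` in the closed segment from `x` to `z`, then
`dΩ x z = dΩ x y + dΩ y z`. -/
theorem hilbert_dist_add_of_mem_segment
    {E : Type*} [NormedAddCommGroup E] [NormedSpace ℝ E] [FiniteDimensional ℝ E]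
    (Ω : Set E) (hne : Ω.Nonempty) (hbdd : Bornology.IsBounded Ω)
    (hop : IsOpen Ω) (hconv : Convex ℝ Ω)
    (dΩ : E → E → ℝ) (hd : IsHilbertDist Ω dΩ)
    {x y z : E} (hx : x ∈ Ω) (hy : y ∈ Ω) (hz : z ∈ Ω)
    (hcol : Collinear ℝ ({x, y, z} : Set E)) (hseg : y ∈ segment ℝ x z) :
    dΩ x z = dΩ x y + dΩ y z := by
  obtain ⟨hd0, hdF⟩ := hd
  by_cases hxy : x = y
  · subst hxy; rw [hd0]; ring
  by_cases hyz : y = z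
  · subst hyz; rw [hd0]; ring
  have hxz : x ≠ z := by
    rintro rfl
    rw [segment_same] at hseg
    exact hxy (mem_singleton_iff.mp hseg).symm
  have hyo : y ∈ openSegment ℝ x z :=
    mem_openSegment_of_ne_left_right hxy (Ne.symm hyz) hseg
  obtain ⟨t, ht0, ht1, hty⟩ := exist3 hyo
  obtain ⟨a, b, haf, hbf, hax, hbz, hxzf⟩ := hdF x hx z hz hxz
  obtain ⟨a1, b1, ha1f, hb1f, ha1x, hb1y, hxyf⟩ := hdF x hx y hy hxy
  obtain ⟨a2, b2, ha2f, hb2f, ha2y, hb2z, hyzf⟩ := hdF y hy z hz hyz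
  obtain ⟨s, hs, has⟩ := exist1 hax
  obtain ⟨s1, hs1, ha1s⟩ := exist1 ha1x
  obtain ⟨s2, hs2, ha2s⟩ := exist1 ha2y
  obtain ⟨r, hr, hbr⟩ := exist2 hbz
  obtain ⟨r1, hr1, hb1r⟩ := exist2 hb1y
  obtain ⟨r2, hr2, hb2r⟩ := exist2 hb2z
  -- rewrite everything over a common base point and direction
  have ha1s' : a1 = x + (s1 * t) • (x - z) := by rw [ha1s, hty]; module
  have haz : a = z + (1 + s) • (x - z) := by rw [has]; module
  have ha2z : a2 = z + ((1 + s2) * (1 - t)) • (x - z) := by rw [ha2s, hty]; module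
  have hb1x : b1 = x + (r1 * t) • (z - x) := by rw [hb1r, hty]; module
  have hb2x : b2 = x + (t + r2 * (1 - t)) • (z - x) := by rw [hb2r, hty]; module
  have haa1 : a = a1 := ray_eq hop hconv hx hs (mul_pos hs1 ht0) has ha1s' haf ha1f
  have haa2 : a = a2 := ray_eq hop hconv hz (by linarith)
    (mul_pos (by linarith) (by linarith)) haz ha2z haf ha2f
  have hbb1 : b = b1 := ray_eq hop hconv hx hr (mul_pos hr1 ht0) hbr hb1x hbf hb1f
  have hbb2 : b = b2 := ray_eq hop hconv hx hr
    (by nlinarith) hbr hb2x hbf hb2f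
  have hnz : ∀ c ∈ frontier Ω, ∀ w ∈ Ω, ‖c - w‖ ≠ 0 := by
    intro c hc w hw h
    rw [norm_eq_zero, sub_eq_zero] at h
    rw [hop.frontier_eq] at hc
    exact hc.2 (by rw [h]; exact hw)
  have hax0 : ‖a - x‖ ≠ 0 := hnz a haf x hx
  have hay0 : ‖a - y‖ ≠ 0 := hnz a haf y hy
  have haz0 : ‖a - z‖ ≠ 0 := hnz a haf z hz
  have hbx0 : ‖b - x‖ ≠ 0 := hnz b hbf x hx
  have hby0 : ‖b - y‖ ≠ 0 := hnz b hbf y hy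
  have hbz0 : ‖b - z‖ ≠ 0 := hnz b hbf z hz
  rw [hxzf, hxyf, hyzf, ← haa1, ← haa2, ← hbb1, ← hbb2]
  have hq1 : (‖a - y‖ * ‖b - x‖) / (‖a - x‖ * ‖b - y‖) ≠ 0 :=
    div_ne_zero (mul_ne_zero hay0 hbx0) (mul_ne_zero hax0 hby0)
  have hq2 : (‖a - z‖ * ‖b - y‖) / (‖a - y‖ * ‖b - z‖) ≠ 0 :=
    div_ne_zero (mul_ne_zero haz0 hby0) (mul_ne_zero hay0 hbz0)
  rw [← mul_add, ← Real.log_mul hq1 hq2]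
  congr 2
  field_simp
end

section
/- Projective transformations between properly convex domains are Hilbert isometries: let Ω, Ω' ⊆ E be nonempty bounded open convex sets, and let g : Ω → Ω' be a bijection of the form g(x) = (A x + u)/(f(x) + d), where A : E → E is linear, u ∈ E, f is a linear functional on E, d ∈ ℝ, and f(x) + d > 0 for all x ∈ Ω. Then d_{Ω'}(g(x), g(y)) = d_Ω(x, y) for all x, y ∈ Ω. -/
open Set

section Helpers

variable {E : Type*} [NormedAddCommGroup E] [NormedSpace ℝ E] {Ω : Set E}

private lemma combo_mem (hop : IsOpen Ω) (hconv : Convex ℝ Ω) {z w : E}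
    (hz : z ∈ Ω) (hw : w ∈ closure Ω) {a b : ℝ} (ha : 0 < a) (hb : 0 ≤ b)
    (hab : a + b = 1) : a • z + b • w ∈ Ω := by
  have h := hconv.combo_interior_closure_mem_interior
    (by rwa [hop.interior_eq]) hw ha hb hab
  rwa [hop.interior_eq] at h

/-- If `x + t•v` is on the frontier with `t < 0` and `x + s•v ∈ Ω` (with `x ∈ Ω`),
then `t < s`. -/
private lemma frontier_param_lt (hop : IsOpen Ω) (hconv : Convex ℝ Ω) {x v : E}
    (hx : x ∈ Ω) {t s : ℝ} (hf : x + t • v ∈ frontier Ω) (ht : t < 0)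
    (hs : x + s • v ∈ Ω) : t < s := by
  by_contra hcon
  push_neg at hcon
  rcases eq_or_lt_of_le hcon with h | h
  · rw [hop.frontier_eq] at hf
    exact hf.2 (h ▸ hs)
  · have hs0 : s < 0 := h.trans ht
    have hss : s ≠ 0 := ne_of_lt hs0
    have hc : 0 < t / s := div_pos_of_neg_of_neg ht hs0
    have hc1 : 0 < 1 - t / s := by
      have h1 : t / s - 1 = (t - s) / s := by field_simp
      have h2 : (t - s) / s < 0 := div_neg_of_pos_of_neg (by linarith) hs0
      linarith
    have key : x + t • v = (1 - t / s) • x + (t / s) • (x + s • v) := by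
      match_scalars <;> field_simp <;> ring
    rw [hop.frontier_eq] at hf
    exact hf.2 (by rw [key]; exact combo_mem hop hconv hx (subset_closure hs) hc1 hc.le (by ring))

private lemma frontier_param_unique (hop : IsOpen Ω) (hconv : Convex ℝ Ω) {x v : E}
    (hx : x ∈ Ω) {t s : ℝ} (hf : x + t • v ∈ frontier Ω) (hg : x + s • v ∈ frontier Ω)
    (ht : t < 0) (hs : s < 0) : t = s := by
  have main : ∀ t s : ℝ, t < s → s < 0 → x + t • v ∈ frontier Ω →
      x + s • v ∈ frontier Ω → False := by
    intro t s hts hs0 hf' hg'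
    have ht0 : t < 0 := hts.trans hs0
    have htt : t ≠ 0 := ne_of_lt ht0
    have hc : 0 < s / t := div_pos_of_neg_of_neg hs0 ht0
    have hc1 : 0 < 1 - s / t := by
      have h1 : s / t - 1 = (s - t) / t := by field_simp
      have h2 : (s - t) / t < 0 := div_neg_of_pos_of_neg (by linarith) ht0
      linarith
    have key : x + s • v = (1 - s / t) • x + (s / t) • (x + t • v) := by
      match_scalars <;> field_simp <;> ring
    rw [hop.frontier_eq] at hg'
    refine hg'.2 ?_
    rw [key]
    exact combo_mem hop hconv hx (frontier_subset_closure hf') hc1 hc.le (by ring)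
  rcases lt_trichotomy t s with h | h | h
  · exact (main t s h hs hf hg).elim
  · exact h
  · exact (main s t h ht hg hf).elim

private lemma chord_mem (hop : IsOpen Ω) (hconv : Convex ℝ Ω) {x v : E}
    (hy : x + v ∈ Ω) (hx : x ∈ Ω) {ta tb t : ℝ}
    (hca : x + ta • v ∈ closure Ω) (hcb : x + tb • v ∈ closure Ω)
    (hta : ta < 0) (htb : 1 < tb) (h1 : ta < t) (h2 : t < tb) : x + t • v ∈ Ω := by
  rcases le_or_gt t 1 with h | h
  · have hne : (1:ℝ) - ta ≠ 0 := ne_of_gt (by linarith)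
    have hc : 0 < (t - ta) / (1 - ta) := div_pos (by linarith) (by linarith)
    have hc1 : 0 ≤ 1 - (t - ta) / (1 - ta) := by
      rw [sub_nonneg, div_le_one (by linarith)]; linarith
    have key : x + t • v = ((t - ta) / (1 - ta)) • (x + v)
        + (1 - (t - ta) / (1 - ta)) • (x + ta • v) := by
      match_scalars <;> field_simp <;> ring
    rw [key]; exact combo_mem hop hconv hy hca hc hc1 (by ring)
  · have htb0 : (0:ℝ) < tb := by linarith
    have hc : 0 < t / tb := div_pos (by linarith) htb0
    have hc1 : 0 < 1 - t / tb := by rw [sub_pos, div_lt_one htb0]; exact h2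
    have key : x + t • v = (1 - t / tb) • x + (t / tb) • (x + tb • v) := by
      match_scalars <;> field_simp <;> ring
    rw [key]; exact combo_mem hop hconv hx hcb hc1 hc.le (by ring)


private lemma seg_param {E : Type*} [AddCommGroup E] [Module ℝ E] {x y a : E} {c₁ c₂ : ℝ}
    (hc₁ : 0 < c₁) (hcs : c₁ + c₂ = 1) (hcx : c₁ • a + c₂ • y = x) :
    a = x + (-c₂ / c₁) • (y - x) := by
  have hc : c₁ ≠ 0 := ne_of_gt hc₁
  apply smul_right_injective E hc
  show c₁ • a = _
  rw [show c₁ • a = x - c₂ • y from by rw [← hcx]; abel]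
  match_scalars <;> field_simp <;> linarith

private lemma seg_param' {E : Type*} [AddCommGroup E] [Module ℝ E] {x y b : E} {e₁ e₂ : ℝ}
    (he₂ : 0 < e₂) (hes : e₁ + e₂ = 1) (hex : e₁ • x + e₂ • b = y) :
    b = x + (1 / e₂) • (y - x) := by
  have hc : e₂ ≠ 0 := ne_of_gt he₂
  apply smul_right_injective E hc
  show e₂ • b = _
  rw [show e₂ • b = y - e₁ • x from by rw [← hex]; abel]
  match_scalars <;> field_simp <;> linarith


private lemma small_step {E : Type*} [NormedAddCommGroup E] [NormedSpace ℝ E] {Ω : Set E}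
    (hop : IsOpen Ω) {z : E} (hz : z ∈ Ω) (e : E) :
    ∃ μ : ℝ, 0 < μ ∧ μ < 1 ∧ z + μ • e ∈ Ω := by
  obtain ⟨ε, hε, hball⟩ := Metric.isOpen_iff.1 hop z hz
  have hd1 : (0:ℝ) < ε / (2 * (‖e‖ + 1)) := by positivity
  refine ⟨min (1/2) (ε / (2 * (‖e‖ + 1))), lt_min (by norm_num) hd1,
    lt_of_le_of_lt (min_le_left _ _) (by norm_num), hball ?_⟩
  rw [Metric.mem_ball, dist_eq_norm, add_sub_cancel_left, norm_smul, Real.norm_eq_abs,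
    abs_of_pos (lt_min (by norm_num) hd1)]
  have h2 : min (1/2) (ε / (2 * (‖e‖ + 1))) ≤ ε / (2 * (‖e‖ + 1)) := min_le_right _ _
  have h3 : (0:ℝ) ≤ ‖e‖ := norm_nonneg e
  calc min (1/2) (ε / (2 * (‖e‖ + 1))) * ‖e‖
      ≤ (ε / (2 * (‖e‖ + 1))) * ‖e‖ := mul_le_mul_of_nonneg_right h2 h3
    _ < ε := by
        rw [div_mul_eq_mul_div, div_lt_iff₀ (by positivity)]
        nlinarith [mul_pos hε (show (0:ℝ) < ‖e‖ + 2 by linarith)]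


private lemma norm_ratio {c : ℝ} (hc : c ≠ 0) (t1 t2 t3 t4 : ℝ) :
    t1 * c * (t2 * c) / (t3 * c * (t4 * c)) = t1 * t2 / (t3 * t4) := by
  have h1 : t1 * c * (t2 * c) = t1 * t2 * (c * c) := by ring
  have h2 : t3 * c * (t4 * c) = t3 * t4 * (c * c) := by ring
  rw [h1, h2, mul_div_mul_right _ _ (mul_ne_zero hc hc)]

private lemma cross_ratio_eq {α β ta tb la lb : ℝ} (hα : 0 < α) (hαβ : 0 < α + β)
    (hDa : 0 < α + ta * β) (hDb : 0 < α + tb * β) (hta : ta < 0) (htb : 1 < tb)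
    (hla : la = ta * (α + β) / (α + ta * β)) (hlb : lb = tb * (α + β) / (α + tb * β)) :
    (1 - la) * lb / (-la * (lb - 1)) = (1 - ta) * tb / (-ta * (tb - 1)) := by
  have hDa' : α + ta * β ≠ 0 := ne_of_gt hDa
  have hDb' : α + tb * β ≠ 0 := ne_of_gt hDb
  have hta' : ta ≠ 0 := ne_of_lt hta
  have htb' : tb - 1 ≠ 0 := ne_of_gt (by linarith)
  have hα' : α ≠ 0 := ne_of_gt hα
  have hαβ' : α + β ≠ 0 := ne_of_gt hαβ
  have hDa'' : α + β * ta ≠ 0 := by rw [mul_comm]; exact hDa'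
  have hDb'' : α + β * tb ≠ 0 := by rw [mul_comm]; exact hDb'
  subst hla hlb
  rw [div_eq_div_iff]
  · field_simp
    ring
  · have h1 : ta * (α + β) / (α + ta * β) < 0 :=
      div_neg_of_neg_of_pos (mul_neg_of_neg_of_pos hta hαβ) hDa
    have h2 : 1 < tb * (α + β) / (α + tb * β) :=
      (one_lt_div hDb).2 (by nlinarith [mul_pos (show (0:ℝ) < tb - 1 by linarith) hα])
    exact ne_of_gt (mul_pos (by linarith) (by linarith))
  · exact ne_of_gt (mul_pos (by linarith) (by linarith))

end Helpers

set_option maxHeartbeats 4000000 in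
/-- Projective transformations between properly convex domains are Hilbert
isometries: if `g : Ω → Ω'` is a bijection of the form
`g x = (A x + u) / (f x + d)` with `A` linear, `f` a linear functional, and
`f x + d > 0` on `Ω`, then `d_{Ω'}(g x, g y) = d_Ω(x, y)` for all `x, y ∈ Ω`. -/
theorem projective_map_is_hilbert_isometry
    {E : Type*} [NormedAddCommGroup E] [NormedSpace ℝ E] [FiniteDimensional ℝ E]
    (Ω Ω' : Set E)
    (hne : Ω.Nonempty) (hbdd : Bornology.IsBounded Ω) (hop : IsOpen Ω) (hconv : Convex ℝ Ω)
    (hne' : Ω'.Nonempty) (hbdd' : Bornology.IsBounded Ω') (hop' : IsOpen Ω') (hconv' : Convex ℝ Ω')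
    (dΩ dΩ' : E → E → ℝ) (hd : IsHilbertDist Ω dΩ) (hd' : IsHilbertDist Ω' dΩ')
    (A : E →ₗ[ℝ] E) (u : E) (f : E →ₗ[ℝ] ℝ) (d : ℝ)
    (hpos : ∀ x ∈ Ω, 0 < f x + d)
    (g : E → E) (hg : ∀ x ∈ Ω, g x = (f x + d)⁻¹ • (A x + u))
    (hbij : Set.BijOn g Ω Ω') :
    ∀ x ∈ Ω, ∀ y ∈ Ω, dΩ' (g x) (g y) = dΩ x y := by
  intro x hx y hy
  by_cases hxy : x = y
  · subst hxy; rw [hd.1, hd'.1]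
  obtain ⟨a, b, haf, hbf, hxa, hyb, hfor⟩ := hd.2 x hx y hy hxy
  set v : E := y - x with hv
  have hvne : v ≠ 0 := sub_ne_zero.2 (Ne.symm hxy)
  have hxv : x + v = y := by rw [hv]; abel
  -- extract the parameters of a, b on the line through x, y
  obtain ⟨c₁, c₂, hc₁, hc₂, hcs, hcx⟩ := hxa
  have hta : -c₂ / c₁ < 0 := div_neg_of_neg_of_pos (neg_lt_zero.2 hc₂) hc₁
  set ta : ℝ := -c₂ / c₁ with hta_def
  have haeq : a = x + ta • v := by
    rw [hta_def, hv]; exact seg_param hc₁ hcs hcx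
  obtain ⟨e₁, e₂, he₁, he₂, hes, hex⟩ := hyb
  set tb : ℝ := 1 / e₂ with htb_def
  have htb : 1 < tb := (one_lt_div he₂).2 (by linarith)
  have hbeq : b = x + tb • v := by
    rw [htb_def, hv]; exact seg_param' he₂ hes hex
  have hafr : x + ta • v ∈ frontier Ω := by rw [← haeq]; exact haf
  have hbfr : x + tb • v ∈ frontier Ω := by rw [← hbeq]; exact hbf
  -- the image side
  have hgxΩ : g x ∈ Ω' := hbij.mapsTo hx
  have hgyΩ : g y ∈ Ω' := hbij.mapsTo hy
  have hgxy : g x ≠ g y := fun h => hxy (hbij.injOn hx hy h)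
  obtain ⟨a', b', ha'f, hb'f, hxa', hyb', hfor'⟩ := hd'.2 (g x) hgxΩ (g y) hgyΩ hgxy
  set v' : E := g y - g x with hv'
  have hv'ne : v' ≠ 0 := sub_ne_zero.2 (Ne.symm hgxy)
  have hgxv : g x + v' = g y := by rw [hv']; abel
  obtain ⟨c₁', c₂', hc₁', hc₂', hcs', hcx'⟩ := hxa'
  have hla : -c₂' / c₁' < 0 := div_neg_of_neg_of_pos (neg_lt_zero.2 hc₂') hc₁'
  set la : ℝ := -c₂' / c₁' with hla_def
  have ha'eq : a' = g x + la • v' := by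
    rw [hla_def, hv']; exact seg_param hc₁' hcs' hcx' 
  obtain ⟨e₁', e₂', he₁', he₂', hes', hex'⟩ := hyb'
  set lb : ℝ := 1 / e₂' with hlb_def
  have hlb : 1 < lb := (one_lt_div he₂').2 (by linarith)
  have hb'eq : b' = g x + lb • v' := by
    rw [hlb_def, hv']; exact seg_param' he₂' hes' hex' 
  have ha'fr : g x + la • v' ∈ frontier Ω' := by rw [← ha'eq]; exact ha'f
  have hb'fr : g x + lb • v' ∈ frontier Ω' := by rw [← hb'eq]; exact hb'f
  -- scalar data
  set α : ℝ := f x + d with hαdef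
  set β : ℝ := f v with hβdef
  have hα : 0 < α := hpos x hx
  have hfy : α + β = f y + d := by rw [hαdef, hβdef, ← hxv, map_add]; ring
  have hαβ : 0 < α + β := by rw [hfy]; exact hpos y hy
  have hα' : α ≠ 0 := ne_of_gt hα
  have hαβ' : α + β ≠ 0 := ne_of_gt hαβ
  have hft : ∀ t : ℝ, f (x + t • v) + d = α + t * β := by
    intro t; rw [map_add, map_smul, smul_eq_mul, hαdef, hβdef]; ring
  -- chord membership and positivity of the denominator on the chord
  have hacl : x + ta • v ∈ closure Ω := frontier_subset_closure hafr
  have hbcl : x + tb • v ∈ closure Ω := frontier_subset_closure hbfr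
  have hchord : ∀ t : ℝ, ta < t → t < tb → x + t • v ∈ Ω := fun t h1 h2 =>
    chord_mem hop hconv (by rw [hxv]; exact hy) hx hacl hbcl hta htb h1 h2
  have hDt : ∀ t : ℝ, ta < t → t < tb → 0 < α + t * β := by
    intro t h1 h2
    have hm := hpos _ (hchord t h1 h2)
    rwa [hft t] at hm
  -- the Möbius parameter map
  set P : E := A x + u with hP
  set Q : E := A y + u with hQ
  have hAv : A v = Q - P := by rw [hv, map_sub, hP, hQ]; abel
  have hgx : g x = α⁻¹ • P := by rw [hg x hx, hαdef, hP]
  have hgy : g y = (α + β)⁻¹ • Q := by rw [hg y hy, ← hfy, hQ]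
  have hv'PQ : v' = (α + β)⁻¹ • Q - α⁻¹ • P := by rw [hv', hgx, hgy]
  clear_value v ta tb v' la lb α β P Q
  set lam : ℝ → ℝ := fun t => t * (α + β) / (α + t * β) with hlam
  clear_value lam
  have hkey : ∀ t : ℝ, α + t * β ≠ 0 →
      (α + t * β)⁻¹ • (A (x + t • v) + u) = g x + lam t • v' := by
    intro t hne0
    have hAp : A (x + t • v) + u = P + t • (Q - P) := by
      rw [map_add, map_smul, hAv, hP]; abel
    rw [hAp, hgx, hv'PQ, hlam]
    match_scalars <;> field_simp <;> ring
  have hgp : ∀ t : ℝ, ta < t → t < tb → g (x + t • v) = g x + lam t • v' := by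
    intro t h1 h2
    rw [hg _ (hchord t h1 h2), hft t]
    exact hkey t (ne_of_gt (hDt t h1 h2))
  -- rebasing at y, with direction -v'
  have hrebase : ∀ s : ℝ, g x + s • v' = g y + (1 - s) • (-v') := by
    intro s; rw [hv']; module
  -- the λ-parameters of chord points lie strictly between la and lb
  have hlam_lb : ∀ t : ℝ, ta < t → t < tb → la < lam t := by
    intro t h1 h2
    have hmem' : g x + lam t • v' ∈ Ω' := by
      rw [← hgp t h1 h2]; exact hbij.mapsTo (hchord t h1 h2)
    exact frontier_param_lt hop' hconv' hgxΩ ha'fr hla hmem'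
  have hlam_ub : ∀ t : ℝ, ta < t → t < tb → lam t < lb := by
    intro t h1 h2
    have hmem' : g x + lam t • v' ∈ Ω' := by
      rw [← hgp t h1 h2]; exact hbij.mapsTo (hchord t h1 h2)
    have hfb : g y + (1 - lb) • (-v') ∈ frontier Ω' := by rw [← hrebase]; exact hb'fr
    have := frontier_param_lt hop' hconv' hgyΩ hfb (by linarith)
      (by rw [← hrebase]; exact hmem')
    linarith
  have htatb : ta < tb := by linarith
  -- positivity of the denominators at the endpoints
  have hDa : 0 < α + ta * β := by
    rcases le_or_gt β 0 with hβ | hβ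
    · nlinarith [mul_nonneg (neg_nonneg.2 hta.le) (neg_nonneg.2 hβ)]
    · by_contra hcon
      push_neg at hcon
      have hc : 0 < α + β - la * β := by nlinarith
      have hK : ∀ t : ℝ, ta < t → t < 0 → la * α / (α + β - la * β) < t := by
        intro t h1 h2
        have h3 := hlam_lb t h1 (by linarith)
        have hD := hDt t h1 (by linarith)
        rw [hlam] at h3
        have h4 : la * (α + t * β) < t * (α + β) := (lt_div_iff₀ hD).1 h3
        rw [div_lt_iff₀ hc]
        nlinarith
      have hKta : la * α / (α + β - la * β) ≤ ta := by
        by_contra hK2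
        push_neg at hK2
        have hKneg : la * α / (α + β - la * β) < 0 :=
          div_neg_of_neg_of_pos (mul_neg_of_neg_of_pos hla hα) hc
        have := hK ((ta + la * α / (α + β - la * β)) / 2) (by linarith) (by linarith)
        linarith
      have h5 : la * α ≤ ta * (α + β - la * β) := (div_le_iff₀ hc).1 hKta
      nlinarith [mul_nonneg (neg_nonneg.2 hla.le) (neg_nonneg.2 hcon),
        mul_neg_of_neg_of_pos hta hαβ]
  have hDb : 0 < α + tb * β := by
    rcases le_or_gt 0 β with hβ | hβ
    · nlinarith [mul_nonneg (by linarith : (0:ℝ) ≤ tb) hβ]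
    · by_contra hcon
      push_neg at hcon
      have hc : 0 < α + β - lb * β := by nlinarith [mul_pos (by linarith : (0:ℝ) < lb - 1) (by linarith : (0:ℝ) < -β)]
      have hK : ∀ t : ℝ, 1 < t → t < tb → t < lb * α / (α + β - lb * β) := by
        intro t h1 h2
        have h3 := hlam_ub t (by linarith) h2
        have hD := hDt t (by linarith) h2
        rw [hlam] at h3
        have h4 : t * (α + β) < lb * (α + t * β) := (div_lt_iff₀ hD).1 h3
        rw [lt_div_iff₀ hc]
        nlinarith
      have hKtb : tb ≤ lb * α / (α + β - lb * β) := by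
        by_contra hK2
        push_neg at hK2
        have hm1 : max 1 (lb * α / (α + β - lb * β)) < tb := max_lt htb hK2
        have hm2 := le_max_left 1 (lb * α / (α + β - lb * β))
        have hm3 := le_max_right 1 (lb * α / (α + β - lb * β))
        have := hK ((max 1 (lb * α / (α + β - lb * β)) + tb) / 2) (by linarith) (by linarith)
        linarith
      have h5 : tb * (α + β - lb * β) ≤ lb * α := (le_div_iff₀ hc).1 hKtb
      nlinarith [mul_nonneg (by linarith : (0:ℝ) ≤ lb) (neg_nonneg.2 hcon),
        mul_pos (by linarith : (0:ℝ) < tb) hαβ]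
  have hDa' : α + ta * β ≠ 0 := ne_of_gt hDa
  have hDb' : α + tb * β ≠ 0 := ne_of_gt hDb
  have hlaa : lam ta < 0 := by
    simp only [hlam]
    exact div_neg_of_neg_of_pos (mul_neg_of_neg_of_pos hta hαβ) hDa
  have hlbb : 1 < lam tb := by
    simp only [hlam]
    exact (one_lt_div hDb).2 (by nlinarith [mul_pos (show (0:ℝ) < tb - 1 by linarith) hα])
  -- the images of the endpoints are in the closure of Ω'
  have hcl_a : g x + lam ta • v' ∈ closure Ω' := by
    apply mem_closure_of_tendsto (b := nhdsWithin ta (Ioi ta))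
    · have h1 : ContinuousAt lam ta := by
        rw [hlam]
        exact (continuousAt_id.mul continuousAt_const).div
          (continuousAt_const.add (continuousAt_id.mul continuousAt_const)) (ne_of_gt hDa)
      exact Filter.Tendsto.mono_left
        (((h1.tendsto).smul_const v').const_add (g x)) nhdsWithin_le_nhds
    · filter_upwards [Ioo_mem_nhdsGT_of_mem (left_mem_Ico.2 htatb)] with t ht
      rw [← hgp t ht.1 ht.2]
      exact hbij.mapsTo (hchord t ht.1 ht.2)
  have hcl_b : g x + lam tb • v' ∈ closure Ω' := by
    apply mem_closure_of_tendsto (b := nhdsWithin tb (Iio tb))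
    · have h1 : ContinuousAt lam tb := by
        rw [hlam]
        exact (continuousAt_id.mul continuousAt_const).div
          (continuousAt_const.add (continuousAt_id.mul continuousAt_const)) (ne_of_gt hDb)
      exact Filter.Tendsto.mono_left
        (((h1.tendsto).smul_const v').const_add (g x)) nhdsWithin_le_nhds
    · filter_upwards [Ioo_mem_nhdsLT_of_mem (right_mem_Ioc.2 htatb)] with t ht
      rw [← hgp t ht.1 ht.2]
      exact hbij.mapsTo (hchord t ht.1 ht.2)
  -- the images of the endpoints are not in Ω'
  have hproj_mem : ∀ c : E, 0 < f c + d → (f c + d)⁻¹ • (A c + u) ∈ Ω' → c ∈ Ω := by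
    intro c hcpos hw
    obtain ⟨z, hz, hgz⟩ := hbij.surjOn hw
    set w : E := (f c + d)⁻¹ • (A c + u) with hwdef
    set γ : ℝ := f c + d with hγdef
    set δ : ℝ := f z + d with hδdef
    have hδ : 0 < δ := hpos z hz
    have hAz : A z + u = δ • w := by
      have h0 := hg z hz
      rw [h0] at hgz
      rw [← hδdef] at hgz
      rw [← hgz, smul_smul, mul_inv_cancel₀ (ne_of_gt hδ), one_smul]
    have hAc : A c + u = γ • w := by
      rw [hwdef, smul_smul, mul_inv_cancel₀ (ne_of_gt hcpos), one_smul]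
    clear_value w γ δ
    have hsmall : ∀ e : E, ∃ μ : ℝ, 0 < μ ∧ μ < 1 ∧ z + μ • e ∈ Ω :=
      fun e => small_step hop hz e
    rcases eq_or_ne γ δ with hγδ | hγδ
    · -- then A (c - z) = 0 and f (c - z) = 0, so c = z by injectivity
      have hfcz : f c = f z := by
        have : f c + d = f z + d := by rw [← hγdef, ← hδdef, hγδ]
        linarith
      have hAcz : A c = A z := by
        have h1 : A c = γ • w - u := by rw [← hAc]; abel
        have h2 : A z = δ • w - u := by rw [← hAz]; abel
        rw [h1, h2, hγδ]
      obtain ⟨μ, hμ, hμ1, hμmem⟩ := hsmall (c - z)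
      have hgeq : g (z + μ • (c - z)) = g z := by
        rw [hg _ hμmem, hg z hz]
        have hf1 : f (z + μ • (c - z)) + d = f z + d := by
          rw [map_add, map_smul, map_sub, smul_eq_mul, hfcz]; ring
        have hf2 : A (z + μ • (c - z)) + u = A z + u := by
          rw [map_add, map_smul, map_sub, hAcz]
          simp
        rw [hf1, hf2]
      have heq := hbij.injOn hμmem hz hgeq
      have h0 : μ • (c - z) = 0 := by rwa [add_eq_left] at heq
      rcases smul_eq_zero.1 h0 with h | h
      · exact absurd h (ne_of_gt hμ)
      · have : c = z := sub_eq_zero.1 h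
        rwa [this]
    · -- otherwise the "point at infinity" zk gives a contradiction
      exfalso
      have hδγ : δ - γ ≠ 0 := sub_ne_zero.2 (Ne.symm hγδ)
      set zk : E := (δ - γ)⁻¹ • (δ • c - γ • z) with hzk
      clear_value zk
      have hfc : f c = γ - d := by rw [hγdef]; ring
      have hfz : f z = δ - d := by rw [hδdef]; ring
      have hfzk : f zk + d = 0 := by
        rw [hzk, map_smul, map_sub, map_smul, map_smul, smul_eq_mul, smul_eq_mul,
          smul_eq_mul, hfc, hfz]
        field_simp
        ring
      have hAzk : A zk + u = 0 := by
        have h1 : A c = γ • w - u := by rw [← hAc]; abel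
        have h2 : A z = δ • w - u := by rw [← hAz]; abel
        have h3 : δ • (γ • w - u) - γ • (δ • w - u) = (γ - δ) • u := by module
        have h4 : (δ - γ)⁻¹ * (γ - δ) = -1 := by
          rw [show γ - δ = -(δ - γ) by ring, mul_neg, inv_mul_cancel₀ hδγ]
        rw [hzk, map_smul, map_sub, map_smul, map_smul, h1, h2, h3, smul_smul, h4,
          neg_one_smul]
        exact neg_add_cancel u
      have hzkz : zk ≠ z := by
        intro h
        rw [h] at hfzk
        rw [← hδdef] at hfzk
        linarith
      obtain ⟨μ, hμ, hμ1, hμmem⟩ := hsmall (zk - z)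
      have hμδ : (1 - μ) * δ ≠ 0 := ne_of_gt (mul_pos (by linarith) hδ)
      have hgeq : g (z + μ • (zk - z)) = g z := by
        rw [hg _ hμmem, hg z hz]
        have hf1 : f (z + μ • (zk - z)) + d = (1 - μ) * δ := by
          rw [map_add, map_smul, map_sub, smul_eq_mul]
          have h1 : f zk = -d := by linarith
          rw [h1, hfz]; ring
        have hf2 : A (z + μ • (zk - z)) + u = ((1 - μ) * δ) • w := by
          have h1 : A zk = -u := by
            have := hAzk
            rw [add_eq_zero_iff_eq_neg] at this
            exact this
          have h2 : A z = δ • w - u := by rw [← hAz]; abel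
          rw [map_add, map_smul, map_sub, h1, h2]
          match_scalars <;> ring
        rw [hf1, hf2, smul_smul, inv_mul_cancel₀ hμδ, one_smul, ← hδdef, hAz,
          smul_smul, inv_mul_cancel₀ (ne_of_gt hδ), one_smul]
      have heq := hbij.injOn hμmem hz hgeq
      have h0 : μ • (zk - z) = 0 := by rwa [add_eq_left] at heq
      rcases smul_eq_zero.1 h0 with h | h
      · exact absurd h (ne_of_gt hμ)
      · exact hzkz (sub_eq_zero.1 h)
  have hnotmem : ∀ s : ℝ, 0 < α + s * β → x + s • v ∈ frontier Ω →
      g x + lam s • v' ∉ Ω' := by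
    intro s hDs hsf hmem
    have h1 : (f (x + s • v) + d)⁻¹ • (A (x + s • v) + u) ∈ Ω' := by
      rw [hft s]
      rw [hkey s (ne_of_gt hDs)]
      exact hmem
    have h2 := hproj_mem (x + s • v) (by rw [hft s]; exact hDs) h1
    rw [hop.frontier_eq] at hsf
    exact hsf.2 h2
  have hfaa : g x + lam ta • v' ∈ frontier Ω' := by
    rw [hop'.frontier_eq]
    exact ⟨hcl_a, hnotmem ta hDa hafr⟩
  have hfbb : g x + lam tb • v' ∈ frontier Ω' := by
    rw [hop'.frontier_eq]
    exact ⟨hcl_b, hnotmem tb hDb hbfr⟩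
  -- identification of the frontier parameters
  have hla_eq : la = lam ta :=
    frontier_param_unique hop' hconv' hgxΩ ha'fr hfaa hla hlaa
  have hlb_eq : lb = lam tb := by
    have h1 : g y + (1 - lb) • (-v') ∈ frontier Ω' := by rw [← hrebase]; exact hb'fr
    have h2 : g y + (1 - lam tb) • (-v') ∈ frontier Ω' := by rw [← hrebase]; exact hfbb
    have := frontier_param_unique hop' hconv' hgyΩ h1 h2 (by linarith) (by linarith)
    linarith
  -- computing both distances
  have hnv : ‖v‖ ≠ 0 := norm_ne_zero_iff.2 hvne
  have hnv' : ‖v'‖ ≠ 0 := norm_ne_zero_iff.2 hv'ne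
  have hRΩ : dΩ x y = 1/2 * Real.log (((1 - ta) * tb) / ((-ta) * (tb - 1))) := by
    rw [hfor, haeq, hbeq]
    have n1 : ‖x + ta • v - y‖ = (1 - ta) * ‖v‖ := by
      have h : x + ta • v - y = (ta - 1) • v := by rw [← hxv]; module
      rw [h, norm_smul, Real.norm_eq_abs, abs_of_neg (by linarith)]; ring
    have n2 : ‖x + tb • v - x‖ = tb * ‖v‖ := by
      have h : x + tb • v - x = tb • v := by module
      rw [h, norm_smul, Real.norm_eq_abs, abs_of_pos (by linarith)]
    have n3 : ‖x + ta • v - x‖ = -ta * ‖v‖ := by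
      have h : x + ta • v - x = ta • v := by module
      rw [h, norm_smul, Real.norm_eq_abs, abs_of_neg hta]
    have n4 : ‖x + tb • v - y‖ = (tb - 1) * ‖v‖ := by
      have h : x + tb • v - y = (tb - 1) • v := by rw [← hxv]; module
      rw [h, norm_smul, Real.norm_eq_abs, abs_of_pos (by linarith)]
    rw [n1, n2, n3, n4, norm_ratio hnv]
  have hRΩ' : dΩ' (g x) (g y) = 1/2 * Real.log (((1 - la) * lb) / ((-la) * (lb - 1))) := by
    rw [hfor', ha'eq, hb'eq]
    have n1 : ‖g x + la • v' - g y‖ = (1 - la) * ‖v'‖ := by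
      have h : g x + la • v' - g y = (la - 1) • v' := by rw [← hgxv]; module
      rw [h, norm_smul, Real.norm_eq_abs, abs_of_neg (by linarith)]; ring
    have n2 : ‖g x + lb • v' - g x‖ = lb * ‖v'‖ := by
      have h : g x + lb • v' - g x = lb • v' := by module
      rw [h, norm_smul, Real.norm_eq_abs, abs_of_pos (by linarith)]
    have n3 : ‖g x + la • v' - g x‖ = -la * ‖v'‖ := by
      have h : g x + la • v' - g x = la • v' := by module
      rw [h, norm_smul, Real.norm_eq_abs, abs_of_neg hla]
    have n4 : ‖g x + lb • v' - g y‖ = (lb - 1) * ‖v'‖ := by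
      have h : g x + lb • v' - g y = (lb - 1) • v' := by rw [← hgxv]; module
      rw [h, norm_smul, Real.norm_eq_abs, abs_of_pos (by linarith)]
    rw [n1, n2, n3, n4, norm_ratio hnv']
  have hfinal : (1 - la) * lb / (-la * (lb - 1)) = (1 - ta) * tb / (-ta * (tb - 1)) := by
    refine cross_ratio_eq hα hαβ hDa hDb hta htb ?_ ?_
    · rw [hla_eq]; simp only [hlam]
    · rw [hlb_eq]; simp only [hlam]
  rw [hRΩ, hRΩ', hfinal]
end

section
/- For any x ∈ Ω and any nonzero vector v ∈ E, set s⁺ := sup{ s ≥ 0 : x + s·v ∈ Ω } (finite since Ω is bounded). Then the map s ↦ d_Ω(x, x + s·v) is a continuous, strictly increasing bijection from [0, s⁺) onto [0, ∞); in particular the Hilbert distance from x to points approaching the boundary along a ray tends to infinity. -/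
open Set Filter

section Helpers
variable {E : Type*} [NormedAddCommGroup E] [NormedSpace ℝ E]
variable {Ω : Set E} {x v : E}

private lemma ray_zero_mem (hx : x ∈ Ω) : (0:ℝ) ∈ {s : ℝ | 0 ≤ s ∧ x + s • v ∈ Ω} :=
  ⟨le_refl 0, by simpa using hx⟩

private lemma ray_bddAbove (hbdd : Bornology.IsBounded Ω) (hv : v ≠ 0) :
    BddAbove {s : ℝ | 0 ≤ s ∧ x + s • v ∈ Ω} := by
  obtain ⟨C, hC⟩ := isBounded_iff_forall_norm_le.1 hbdd
  refine ⟨(C + ‖x‖) / ‖v‖, fun s hs => ?_⟩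
  have hnv : (0:ℝ) < ‖v‖ := norm_pos_iff.2 hv
  have h1 : ‖s • v‖ ≤ C + ‖x‖ := by
    have h2 := hC _ hs.2
    calc ‖s • v‖ = ‖(x + s • v) - x‖ := by rw [add_sub_cancel_left]
      _ ≤ ‖x + s • v‖ + ‖x‖ := norm_sub_le _ _
      _ ≤ C + ‖x‖ := by linarith
  rw [norm_smul, Real.norm_eq_abs, abs_of_nonneg hs.1] at h1
  rw [le_div_iff₀ hnv]
  exact h1

private lemma ray_sup_pos (hop : IsOpen Ω) (hbdd : Bornology.IsBounded Ω)
    (hx : x ∈ Ω) (hv : v ≠ 0) :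
    0 < sSup {s : ℝ | 0 ≤ s ∧ x + s • v ∈ Ω} := by
  obtain ⟨ε, hε, hball⟩ := Metric.isOpen_iff.1 hop x hx
  have hnv : (0:ℝ) < ‖v‖ := norm_pos_iff.2 hv
  set s₀ := ε / (2 * ‖v‖) with hs₀def
  have hs₀ : 0 < s₀ := div_pos hε (by positivity)
  have hmem : s₀ ∈ {s : ℝ | 0 ≤ s ∧ x + s • v ∈ Ω} := by
    refine ⟨hs₀.le, hball ?_⟩
    rw [Metric.mem_ball, dist_eq_norm, add_sub_cancel_left, norm_smul,
      Real.norm_eq_abs, abs_of_nonneg hs₀.le]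
    have : s₀ * ‖v‖ = ε / 2 := by rw [hs₀def]; field_simp
    rw [this]; linarith
  calc 0 < s₀ := hs₀
    _ ≤ _ := le_csSup (ray_bddAbove hbdd hv) hmem

private lemma ray_mem_of_lt (hconv : Convex ℝ Ω) (hx : x ∈ Ω) {s : ℝ} (h0 : 0 ≤ s)
    (hlt : s < sSup {s : ℝ | 0 ≤ s ∧ x + s • v ∈ Ω}) : x + s • v ∈ Ω := by
  obtain ⟨s', hs', hss'⟩ := exists_lt_of_lt_csSup ⟨0, ray_zero_mem hx⟩ hlt
  have hs'0 : 0 < s' := lt_of_le_of_lt h0 hss'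
  have heq : x + s • v = (1 - s/s') • x + (s/s') • (x + s' • v) := by
    match_scalars <;> field_simp <;> ring
  rw [heq]
  exact hconv hx hs'.2 (sub_nonneg.2 ((div_le_one hs'0).2 hss'.le)) (by positivity)
    (by ring)

private lemma ray_sup_not_mem (hbdd : Bornology.IsBounded Ω) (hop : IsOpen Ω)
    (hx : x ∈ Ω) (hv : v ≠ 0) :
    x + (sSup {s : ℝ | 0 ≤ s ∧ x + s • v ∈ Ω}) • v ∉ Ω := by
  set τ := sSup {s : ℝ | 0 ≤ s ∧ x + s • v ∈ Ω} with hτ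
  intro hmem
  have hτ0 : 0 < τ := ray_sup_pos hop hbdd hx hv
  obtain ⟨ε, hε, hball⟩ := Metric.isOpen_iff.1 hop _ hmem
  have hnv : (0:ℝ) < ‖v‖ := norm_pos_iff.2 hv
  set δ := ε / (2 * ‖v‖) with hδdef
  have hδ : 0 < δ := div_pos hε (by positivity)
  have hmem2 : τ + δ ∈ {s : ℝ | 0 ≤ s ∧ x + s • v ∈ Ω} := by
    refine ⟨by linarith, hball ?_⟩
    rw [Metric.mem_ball, dist_eq_norm]
    have : x + (τ + δ) • v - (x + τ • v) = δ • v := by module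
    rw [this, norm_smul, Real.norm_eq_abs, abs_of_nonneg hδ.le]
    have : δ * ‖v‖ = ε / 2 := by rw [hδdef]; field_simp
    rw [this]; linarith
  have := le_csSup (ray_bddAbove hbdd hv) hmem2
  linarith

private lemma ray_sup_mem_frontier (hbdd : Bornology.IsBounded Ω) (hop : IsOpen Ω)
    (hconv : Convex ℝ Ω) (hx : x ∈ Ω) (hv : v ≠ 0) :
    x + (sSup {s : ℝ | 0 ≤ s ∧ x + s • v ∈ Ω}) • v ∈ frontier Ω := by
  set τ := sSup {s : ℝ | 0 ≤ s ∧ x + s • v ∈ Ω} with hτ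
  have hτ0 : 0 < τ := ray_sup_pos hop hbdd hx hv
  rw [hop.frontier_eq, mem_diff]
  refine ⟨?_, ray_sup_not_mem hbdd hop hx hv⟩
  have htend : Tendsto (fun s : ℝ => x + s • v) (nhdsWithin τ (Iio τ)) (nhds (x + τ • v)) :=
    ((continuous_const.add (continuous_id.smul continuous_const)).tendsto τ).mono_left
      nhdsWithin_le_nhds
  refine mem_closure_of_tendsto htend ?_
  filter_upwards [Ioo_mem_nhdsLT_of_mem (⟨hτ0, le_refl τ⟩ : τ ∈ Ioc 0 τ)] with s hs
  exact ray_mem_of_lt hconv hx hs.1.le hs.2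

private lemma ray_frontier_eq (hbdd : Bornology.IsBounded Ω) (hop : IsOpen Ω)
    (hconv : Convex ℝ Ω) (hx : x ∈ Ω) (hv : v ≠ 0) {t : ℝ} (ht : 0 < t)
    (hf : x + t • v ∈ frontier Ω) :
    t = sSup {s : ℝ | 0 ≤ s ∧ x + s • v ∈ Ω} := by
  set τ := sSup {s : ℝ | 0 ≤ s ∧ x + s • v ∈ Ω} with hτ
  rcases lt_trichotomy t τ with h | h | h
  · exfalso
    have : x + t • v ∈ Ω := ray_mem_of_lt hconv hx ht.le h
    rw [hop.frontier_eq] at hf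
    exact hf.2 this
  · exact h
  · exfalso
    have hτ0 : 0 < τ := ray_sup_pos hop hbdd hx hv
    have hcl : x + t • v ∈ closure Ω := frontier_subset_closure hf
    have hint : x ∈ interior Ω := by rw [hop.interior_eq]; exact hx
    have hseg : x + τ • v ∈ openSegment ℝ x (x + t • v) := by
      refine ⟨1 - τ/t, τ/t, ?_, by positivity, by ring, ?_⟩
      · rw [sub_pos]; exact (div_lt_one ht).2 h
      · match_scalars <;> field_simp <;> ring
    have := hconv.openSegment_interior_closure_subset_interior hint hcl hseg
    rw [hop.interior_eq] at this
    exact ray_sup_not_mem hbdd hop hx hv this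
private lemma ray_dist_formula (hbdd : Bornology.IsBounded Ω) (hop : IsOpen Ω)
    (hconv : Convex ℝ Ω) (hx : x ∈ Ω) (hv : v ≠ 0)
    {dΩ : E → E → ℝ} (hd : IsHilbertDist Ω dΩ) {s : ℝ}
    (hs0 : 0 < s) (hsτ : s < sSup {s : ℝ | 0 ≤ s ∧ x + s • v ∈ Ω}) :
    dΩ x (x + s • v) = (1/2) * Real.log
      (((sSup {s : ℝ | 0 ≤ s ∧ x + s • (-v) ∈ Ω} + s) *
          sSup {s : ℝ | 0 ≤ s ∧ x + s • v ∈ Ω}) /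
        (sSup {s : ℝ | 0 ≤ s ∧ x + s • (-v) ∈ Ω} *
          (sSup {s : ℝ | 0 ≤ s ∧ x + s • v ∈ Ω} - s))) := by
  set τ := sSup {s : ℝ | 0 ≤ s ∧ x + s • v ∈ Ω} with hτdef
  set σ := sSup {s : ℝ | 0 ≤ s ∧ x + s • (-v) ∈ Ω} with hσdef
  have hv' : (-v) ≠ 0 := neg_ne_zero.2 hv
  have hnv : (0:ℝ) < ‖v‖ := norm_pos_iff.2 hv
  have hτ0 : 0 < τ := ray_sup_pos hop hbdd hx hv
  have hσ0 : 0 < σ := ray_sup_pos hop hbdd hx hv'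
  have hy : x + s • v ∈ Ω := ray_mem_of_lt hconv hx hs0.le hsτ
  have hxy : x ≠ x + s • v := by
    simp only [ne_eq, left_eq_add, smul_eq_zero, not_or]
    exact ⟨ne_of_gt hs0, hv⟩
  obtain ⟨a, b, haf, hbf, hxab, hyab, hform⟩ := hd.2 x hx _ hy hxy
  -- identify a
  obtain ⟨u, w, hu, hw, huw, heq⟩ := hxab
  have ha : a = x + (-(w*s)/u) • v := by
    apply smul_right_injective E (ne_of_gt hu)
    show u • a = u • (x + (-(w*s)/u) • v)
    rw [eq_sub_of_add_eq heq]
    match_scalars <;> field_simp <;> linarith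
  have haσ : a = x + (-σ) • v := by
    have ht0 : 0 < (w*s)/u := by positivity
    have haf' : x + ((w*s)/u) • (-v) ∈ frontier Ω := by
      have : x + ((w*s)/u) • (-v) = a := by rw [ha]; module
      rw [this]; exact haf
    have hσeq : σ = w * s / u := by
      rw [hσdef]; exact (ray_frontier_eq hbdd hop hconv hx hv' ht0 haf').symm
    rw [ha, hσeq]
    match_scalars <;> field_simp
  -- identify b
  obtain ⟨u', w', hu', hw', hu'w', heq'⟩ := hyab
  have hb : b = x + (s/w') • v := by
    apply smul_right_injective E (ne_of_gt hw')
    show w' • b = w' • (x + (s/w') • v)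
    have : w' • b = (x + s • v) - u' • x := by
      rw [← heq']; module
    rw [this]
    match_scalars <;> field_simp <;> linarith
  have hbτ : b = x + τ • v := by
    have ht0 : 0 < s/w' := by positivity
    have hbf' : x + (s/w') • v ∈ frontier Ω := hb ▸ hbf
    have := ray_frontier_eq hbdd hop hconv hx hv ht0 hbf'
    rw [hb, this]
  -- compute norms
  have hay : a - (x + s • v) = (-(σ+s)) • v := by rw [haσ]; module
  have hbx : b - x = τ • v := by rw [hbτ]; module
  have hax : a - x = (-σ) • v := by rw [haσ]; module
  have hby : b - (x + s • v) = (τ - s) • v := by rw [hbτ]; module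
  rw [hform, hay, hbx, hax, hby, norm_smul, norm_smul, norm_smul, norm_smul]
  simp only [Real.norm_eq_abs]
  rw [abs_of_neg (by linarith : -(σ+s) < 0), abs_of_pos hτ0,
    abs_of_neg (by linarith : -σ < 0), abs_of_pos (by linarith : (0:ℝ) < τ - s)]
  have hts : (0:ℝ) < τ - s := by linarith
  have harg : (σ+s)*‖v‖ * (τ*‖v‖) / (σ*‖v‖ * ((τ-s)*‖v‖)) = (σ+s)*τ/(σ*(τ-s)) := by
    rw [div_eq_div_iff (by positivity) (by positivity)]; ring
  simp only [neg_neg]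
  rw [harg]

end Helpers

/-- For `x ∈ Ω` and `v ≠ 0`, with `s⁺ := sup { s ≥ 0 : x + s·v ∈ Ω }`, the map
`s ↦ dΩ(x, x + s·v)` is a continuous strictly increasing bijection from `[0, s⁺)`
onto `[0, ∞)`; in particular the Hilbert distance from `x` to points approaching the
boundary along the ray tends to infinity. -/
theorem hilbert_dist_along_ray
    {E : Type*} [NormedAddCommGroup E] [NormedSpace ℝ E] [FiniteDimensional ℝ E]
    (Ω : Set E) (hne : Ω.Nonempty) (hbdd : Bornology.IsBounded Ω)
    (hop : IsOpen Ω) (hconv : Convex ℝ Ω)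
    (dΩ : E → E → ℝ) (hd : IsHilbertDist Ω dΩ)
    {x : E} (hx : x ∈ Ω) {v : E} (hv : v ≠ 0) :
    StrictMonoOn (fun s : ℝ => dΩ x (x + s • v))
        (Set.Ico 0 (sSup {s : ℝ | 0 ≤ s ∧ x + s • v ∈ Ω})) ∧
      ContinuousOn (fun s : ℝ => dΩ x (x + s • v))
        (Set.Ico 0 (sSup {s : ℝ | 0 ≤ s ∧ x + s • v ∈ Ω})) ∧
      Set.BijOn (fun s : ℝ => dΩ x (x + s • v))
        (Set.Ico 0 (sSup {s : ℝ | 0 ≤ s ∧ x + s • v ∈ Ω})) (Set.Ici 0) ∧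
      Filter.Tendsto (fun s : ℝ => dΩ x (x + s • v))
        (nhdsWithin (sSup {s : ℝ | 0 ≤ s ∧ x + s • v ∈ Ω})
          (Set.Iio (sSup {s : ℝ | 0 ≤ s ∧ x + s • v ∈ Ω}))) Filter.atTop := by
  set τ := sSup {s : ℝ | 0 ≤ s ∧ x + s • v ∈ Ω} with hτdef
  set σ := sSup {s : ℝ | 0 ≤ s ∧ x + s • (-v) ∈ Ω} with hσdef
  have hv' : (-v) ≠ 0 := neg_ne_zero.2 hv
  have hτ0 : 0 < τ := ray_sup_pos hop hbdd hx hv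
  have hσ0 : 0 < σ := ray_sup_pos hop hbdd hx hv'
  set f : ℝ → ℝ := fun s => dΩ x (x + s • v) with hfdef
  set g : ℝ → ℝ := fun s => (1/2) * Real.log (((σ + s) * τ) / (σ * (τ - s))) with hgdef
  have hg0 : g 0 = 0 := by
    have h1 : ((σ + 0) * τ) / (σ * (τ - 0)) = 1 := by
      rw [add_zero, sub_zero]
      field_simp [mul_comm]
    simp only [hgdef, h1, Real.log_one, mul_zero]
  have heq : EqOn f g (Ico 0 τ) := by
    intro s hs
    rcases eq_or_lt_of_le hs.1 with h0 | h0
    · rw [← h0, hg0]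
      simp only [hfdef, zero_smul, add_zero]
      exact hd.1 x
    · exact ray_dist_formula hbdd hop hconv hx hv hd h0 hs.2
  have hargpos : ∀ s ∈ Ico 0 τ, 0 < ((σ + s) * τ) / (σ * (τ - s)) := by
    intro s hs
    have h1 : 0 < σ + s := by linarith [hs.1]
    have h2 : 0 < τ - s := by linarith [hs.2]
    positivity
  have hmono : StrictMonoOn g (Ico 0 τ) := by
    intro s1 hs1 s2 hs2 h12
    have h1 : 0 < τ - s2 := by linarith [hs2.2]
    have h2 : 0 < τ - s1 := by linarith [hs1.2]
    have h3 : 0 ≤ s1 := hs1.1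
    have hlt : ((σ + s1) * τ) / (σ * (τ - s1)) < ((σ + s2) * τ) / (σ * (τ - s2)) := by
      rw [div_lt_div_iff₀ (by positivity) (by positivity)]
      have key : (σ + s2) * τ * (σ * (τ - s1)) - (σ + s1) * τ * (σ * (τ - s2))
          = σ * τ * (σ + τ) * (s2 - s1) := by ring
      nlinarith [mul_pos (mul_pos (mul_pos hσ0 hτ0)
        (by linarith : (0:ℝ) < σ + τ)) (sub_pos.2 h12)]
    have := Real.log_lt_log (hargpos s1 hs1) hlt
    simp only [hgdef]
    linarith
  have hcont : ContinuousOn g (Ico 0 τ) := by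
    apply ContinuousOn.mul continuousOn_const
    apply ContinuousOn.log
    · apply ContinuousOn.div
      · fun_prop
      · fun_prop
      · intro s hs
        have h2 : 0 < τ - s := by linarith [hs.2]
        positivity
    · intro s hs
      exact ne_of_gt (hargpos s hs)
  have htends : Tendsto g (nhdsWithin τ (Iio τ)) atTop := by
    apply Tendsto.const_mul_atTop (by norm_num : (0:ℝ) < 1/2)
    have hinner : Tendsto (fun s : ℝ => ((σ + s) * τ) / (σ * (τ - s)))
        (nhdsWithin τ (Iio τ)) atTop := by
      have h1 : Tendsto (fun s : ℝ => (σ + s) * τ) (nhdsWithin τ (Iio τ))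
          (nhds ((σ + τ) * τ)) := by
        apply Tendsto.mono_left _ nhdsWithin_le_nhds
        exact (Continuous.mul (continuous_const.add continuous_id) continuous_const).tendsto τ
      have h2 : Tendsto (fun s : ℝ => (σ * (τ - s))⁻¹) (nhdsWithin τ (Iio τ)) atTop := by
        apply Tendsto.inv_tendsto_nhdsGT_zero
        rw [tendsto_nhdsWithin_iff]
        constructor
        · have hc : Tendsto (fun s : ℝ => σ * (τ - s)) (nhds τ) (nhds (σ * (τ - τ))) :=
            (continuous_const.mul (continuous_const.sub continuous_id)).tendsto τ
          simpa using hc.mono_left nhdsWithin_le_nhds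
        · filter_upwards [self_mem_nhdsWithin] with s hs
          have h3 : s < τ := hs
          have h4 : 0 < τ - s := by linarith
          exact mul_pos hσ0 h4
      have := Tendsto.pos_mul_atTop (show (0:ℝ) < (σ + τ) * τ by positivity) h1 h2
      exact this.congr (fun s => (div_eq_mul_inv _ _).symm)
    exact Real.tendsto_log_atTop.comp hinner
  have hzero : (0:ℝ) ∈ Ico (0:ℝ) τ := ⟨le_refl 0, hτ0⟩
  have hmaps : MapsTo g (Ico 0 τ) (Ici 0) := by
    intro s hs
    rcases eq_or_lt_of_le hs.1 with h0 | h0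
    · rw [← h0, hg0]; exact mem_Ici.2 (le_refl 0)
    · have := hmono hzero hs h0
      rw [hg0] at this
      exact le_of_lt this
  have hsurj : SurjOn g (Ico 0 τ) (Ici 0) := by
    intro c hc
    have hev : ∀ᶠ s in nhdsWithin τ (Iio τ), c < g s := htends.eventually_gt_atTop c
    obtain ⟨s₀, hgs₀, hs₀⟩ :=
      (hev.and (Ioo_mem_nhdsLT_of_mem (⟨hτ0, le_refl τ⟩ : τ ∈ Ioc 0 τ))).exists
    have hsub : Icc (0:ℝ) s₀ ⊆ Ico 0 τ := fun t ht => ⟨ht.1, lt_of_le_of_lt ht.2 hs₀.2⟩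
    have hiv := intermediate_value_Ico hs₀.1.le (hcont.mono hsub)
    have hcm : c ∈ Ico (g 0) (g s₀) := ⟨by rw [hg0]; exact hc, hgs₀⟩
    obtain ⟨s, hsmem, hgs⟩ := hiv hcm
    exact ⟨s, ⟨hsmem.1, lt_trans hsmem.2 hs₀.2⟩, hgs⟩
  refine ⟨?_, hcont.congr heq, (heq.bijOn_iff).2 ⟨hmaps, hmono.injOn, hsurj⟩, ?_⟩
  · intro s1 hs1 s2 hs2 hlt
    have := hmono hs1 hs2 hlt
    rwa [← heq hs1, ← heq hs2] at this
  · apply Tendsto.congr' _ htends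
    filter_upwards [Ioo_mem_nhdsLT_of_mem (⟨hτ0, le_refl τ⟩ : τ ∈ Ioc 0 τ)] with s hs
    exact (heq ⟨hs.1.le, hs.2⟩).symm
end

section
/- Let X be a compact metric space and f a continuous flow on X. For u ∈ X define W^{su}(u) := { w ∈ X : d(f^{−t}(w), f^{−t}(u)) → 0 as t → +∞ }. Suppose the set of periodic points p (those with f^{T_p}(p) = p for some T_p > 0) such that W^{su}(p) is dense in X is itself dense in X. Then f is topologically mixing: for all nonempty open sets U, V ⊆ X there exists T > 0 such that fᵗ(U) ∩ V ≠ ∅ for all t ≥ T. -/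
open Set Filter Metric

/-- The strong unstable set of `u` for the flow `f`: points `w` with
`d(f⁻ᵗ w, f⁻ᵗ u) → 0` as `t → +∞`. -/
def strongUnstable {X : Type*} [MetricSpace X] (f : ℝ → X → X) (u : X) : Set X :=
  {w : X | Filter.Tendsto (fun t : ℝ => dist (f (-t) w) (f (-t) u)) Filter.atTop (nhds 0)}

/-- If the periodic points whose strong unstable sets are dense form a dense subset of
the compact phase space, then the continuous flow is topologically mixing. -/
theorem mixing_of_dense_periodic_with_dense_unstables
    {X : Type*} [MetricSpace X] [CompactSpace X]
    (f : ℝ → X → X) (hcont : Continuous fun q : ℝ × X => f q.1 q.2)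
    (hid : ∀ x : X, f 0 x = x)
    (hflow : ∀ s t : ℝ, ∀ x : X, f (s + t) x = f s (f t x))
    (hdense : Dense {p : X | (∃ Tp > (0:ℝ), f Tp p = p) ∧ Dense (strongUnstable f p)}) :
    ∀ U V : Set X, IsOpen U → IsOpen V → U.Nonempty → V.Nonempty →
      ∃ T > (0:ℝ), ∀ t ≥ T, ((f t) '' U ∩ V).Nonempty := by
  intro U V hU hV hUne hVne
  -- basic flow facts
  have finv : ∀ t : ℝ, ∀ x : X, f t (f (-t) x) = x := by
    intro t x
    rw [← hflow]
    simp [hid]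
  have finv' : ∀ t : ℝ, ∀ x : X, f (-t) (f t x) = x := by
    intro t x
    rw [← hflow]
    simp [hid]
  -- pick a periodic point p in U with dense unstable set
  obtain ⟨p, ⟨⟨Tp, hTp, hper⟩, hdun⟩, hpU⟩ := hdense.exists_mem_open hU hUne
  -- ball around p inside U
  obtain ⟨r, hr, hball⟩ := Metric.isOpen_iff.mp hU p hpU
  -- periodicity at multiples
  have fper : ∀ n : ℕ, f ((n : ℝ) * Tp) p = p := by
    intro n
    induction n with
    | zero => simpa using hid p
    | succ n ih =>
        have : ((n + 1 : ℕ) : ℝ) * Tp = Tp + (n : ℝ) * Tp := by push_cast; ring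
        rw [this, hflow, ih, hper]
  have fperneg : ∀ n : ℕ, f (-((n : ℝ) * Tp)) p = p := by
    intro n
    conv_lhs => rw [← fper n]
    rw [finv']
  -- for each phase s pick a point of the unstable set mapped into V by f s
  have key : ∀ s : ℝ, ∃ w, w ∈ strongUnstable f p ∧ f s w ∈ V := by
    intro s
    have hopen : IsOpen ((fun x => f s x) ⁻¹' V) :=
      hV.preimage (hcont.comp (continuous_const.prodMk continuous_id))
    have hne : ((fun x => f s x) ⁻¹' V).Nonempty := by
      obtain ⟨v, hv⟩ := hVne
      exact ⟨f (-s) v, by simp [Set.mem_preimage, finv s v, hv]⟩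
    obtain ⟨w, hw1, hw2⟩ := hdun.exists_mem_open hopen hne
    exact ⟨w, hw1, hw2⟩
  choose w hw1 hw2 using key
  -- waiting times
  have hM : ∀ s : ℝ, ∃ M : ℝ, ∀ t ≥ M, dist (f (-t) (w s)) (f (-t) p) < r := by
    intro s
    have := (hw1 s).eventually (Iio_mem_nhds hr)
    rw [eventually_atTop] at this
    obtain ⟨M, hMM⟩ := this
    exact ⟨M, fun t ht => hMM t ht⟩
  choose M hMspec using hM
  -- compactness: finite subcover of [0, Tp]
  have hopenO : ∀ s : ℝ, IsOpen {s' : ℝ | f s' (w s) ∈ V} := by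
    intro s
    exact hV.preimage (hcont.comp (continuous_id.prodMk continuous_const))
  have hcov : Icc (0:ℝ) Tp ⊆ ⋃ s : ℝ, {s' : ℝ | f s' (w s) ∈ V} := by
    intro s hs
    exact Set.mem_iUnion.2 ⟨s, hw2 s⟩
  obtain ⟨F, hF⟩ := isCompact_Icc.elim_finite_subcover _ hopenO hcov
  -- uniform bound on waiting times over F
  obtain ⟨N, hN⟩ := (F.image M).exists_le
  have hNle : ∀ s ∈ F, M s ≤ N := fun s hs => hN _ (Finset.mem_image_of_mem M hs)
  obtain ⟨n0, hn0⟩ := exists_nat_ge (N / Tp)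
  have hn0N : N ≤ (n0 : ℝ) * Tp := by
    rw [div_le_iff₀ hTp] at hn0
    linarith
  refine ⟨((n0 : ℝ) + 1) * Tp, by positivity, ?_⟩
  intro t ht
  have htpos : 0 < t := lt_of_lt_of_le (by positivity) ht
  set n : ℕ := ⌊t / Tp⌋₊ with hn
  have hnle : (n : ℝ) ≤ t / Tp := Nat.floor_le (by positivity)
  have hnlt : t / Tp < (n : ℝ) + 1 := Nat.lt_floor_add_one _
  have hnTp_le : (n : ℝ) * Tp ≤ t := (le_div_iff₀ hTp).mp hnle
  have ht_lt : t < ((n : ℝ) + 1) * Tp := by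
    rw [← div_lt_iff₀ hTp]
    exact hnlt
  have hn_ge : (n0 : ℝ) + 1 ≤ (n : ℝ) + 1 := by
    have h1 : ((n0 : ℝ) + 1) ≤ t / Tp := by
      rw [le_div_iff₀ hTp]; linarith
    linarith [hnle, h1.trans hnlt.le]
  have hn_ge' : (n0 : ℝ) ≤ (n : ℝ) := by linarith
  -- the phase
  set s : ℝ := t - (n : ℝ) * Tp with hs
  have hsIcc : s ∈ Icc (0:ℝ) Tp := ⟨by simp [hs]; linarith, by simp [hs]; nlinarith⟩
  obtain ⟨s', hs'F, hs'mem⟩ : ∃ s' ∈ F, s ∈ {s'' : ℝ | f s'' (w s') ∈ V} := by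
    have := hF hsIcc
    simpa using this
  -- the point
  have hbig : M s' ≤ (n : ℝ) * Tp := by
    calc M s' ≤ N := hNle s' hs'F
    _ ≤ (n0 : ℝ) * Tp := hn0N
    _ ≤ (n : ℝ) * Tp := by nlinarith
  have hdist := hMspec s' ((n : ℝ) * Tp) hbig
  rw [fperneg n] at hdist
  set x : X := f (-((n : ℝ) * Tp)) (w s') with hx
  have hxU : x ∈ U := hball (Metric.mem_ball.mpr hdist)
  have hfx : f t x = f s (w s') := by
    have : t = s + (n : ℝ) * Tp := by ring
    rw [this, hflow, hx, finv]
  exact ⟨f t x, ⟨x, hxU, rfl⟩, by rw [hfx]; exact hs'mem⟩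
end

section
/- Let X be a proper metric space (closed bounded sets are compact) and let Γ be a group acting on X by isometries, properly discontinuously and cocompactly. Let μ be a Borel measure on X for which there exist constants 0 < c ≤ C < ∞ with c ≤ μ(B(x,1)) ≤ C for all x ∈ X. Then for every basepoint x₀ ∈ X, the critical exponent of Γ equals the volume growth exponent of μ: limsup_{r→∞} (1/r)·log #{ γ ∈ Γ : d(x₀, γ·x₀) ≤ r } = limsup_{r→∞} (1/r)·log μ(B(x₀, r)). -/
open Set Filter Metric MeasureTheory ENNReal

private lemma aux_mem {F G : ℝ → ℝ} {a K : ℝ}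
    (h : ∀ᶠ r in atTop, F r ≤ G (r + a) + K) {b ε : ℝ} (hε : 0 < ε)
    (hb : ∀ᶠ r in atTop, G r / r ≤ b) :
    ∀ᶠ r in atTop, F r / r ≤ b + ε := by
  have hb' : ∀ᶠ r : ℝ in atTop, G (r + a) / (r + a) ≤ b :=
    (tendsto_atTop_add_const_right atTop a tendsto_id).eventually hb
  have h1 : ∀ᶠ r : ℝ in atTop, (0 : ℝ) < r := eventually_gt_atTop 0
  have h2 : ∀ᶠ r : ℝ in atTop, (0 : ℝ) < r + a :=
    (tendsto_atTop_add_const_right atTop a tendsto_id).eventually (eventually_gt_atTop 0)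
  have h3 : ∀ᶠ r : ℝ in atTop, b * a + K ≤ ε * r := by
    filter_upwards [eventually_ge_atTop ((b * a + K) / ε)] with r hr
    rw [div_le_iff₀ hε] at hr; linarith [hr]
  filter_upwards [h, hb', h1, h2, h3] with r hF hG hr hra h3
  have hGr : G (r + a) ≤ b * (r + a) := by
    have := (div_le_iff₀ hra).mp hG; linarith
  have : F r ≤ (b + ε) * r := by
    have : F r ≤ b * r + (b * a + K) := by linarith
    nlinarith
  exact (div_le_iff₀ hr).mpr this

private lemma aux_sInf_eq {S T : Set ℝ} (h : ∀ b ∈ T, ∀ ε > (0:ℝ), b + ε ∈ S)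
    (h' : ∀ b ∈ S, ∀ ε > (0:ℝ), b + ε ∈ T) : sInf S = sInf T := by
  rcases T.eq_empty_or_nonempty with hT | hT
  · rcases S.eq_empty_or_nonempty with hS | hS
    · rw [hS, hT]
    · obtain ⟨b, hb⟩ := hS
      exact absurd (h' b hb 1 one_pos) (by simp [hT])
  · have hT' := hT; obtain ⟨b0, hb0⟩ := hT'
    have hS : S.Nonempty := ⟨b0 + 1, h b0 hb0 1 one_pos⟩
    by_cases hbdd : BddBelow S
    · have hbddT : BddBelow T := by
        obtain ⟨m, hm⟩ := hbdd
        exact ⟨m - 1, fun b hb => by linarith [hm (h b hb 1 one_pos)]⟩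
      apply le_antisymm
      · refine le_csInf hT fun b hb => le_of_forall_pos_le_add fun ε hε => csInf_le hbdd (h b hb ε hε)
      · refine le_csInf hS fun b hb => le_of_forall_pos_le_add fun ε hε => csInf_le hbddT (h' b hb ε hε)
    · have hbddT : ¬ BddBelow T := by
        intro ⟨m, hm⟩
        exact hbdd ⟨m - 1, fun b hb => by linarith [hm (h' b hb 1 one_pos)]⟩
      rw [Real.sInf_of_not_bddBelow hbdd, Real.sInf_of_not_bddBelow hbddT]

private lemma aux_limsup_eq {F G : ℝ → ℝ} {a K : ℝ}
    (h₁ : ∀ᶠ r in atTop, F r ≤ G (r + a) + K)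
    (h₂ : ∀ᶠ r in atTop, G r ≤ F (r + a) + K) :
    limsup (fun r => F r / r) atTop = limsup (fun r => G r / r) atTop := by
  rw [limsup_eq, limsup_eq]
  exact aux_sInf_eq (fun b hb ε hε => aux_mem h₁ hε hb) (fun b hb ε hε => aux_mem h₂ hε hb)
/-- For a properly discontinuous, cocompact isometric action of a group `Γ` on a
proper metric space `X`, and a Borel measure `μ` whose unit balls have measure
uniformly bounded above and below by positive constants, the critical exponent of `Γ`
equals the volume growth exponent of `μ`:
`limsup_{r→∞} (1/r)·log #{γ : d(x₀, γ·x₀) ≤ r} = limsup_{r→∞} (1/r)·log μ(B(x₀, r))`. -/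
theorem critical_exponent_eq_volume_entropy
    {X : Type*} [MetricSpace X] [ProperSpace X]
    [MeasurableSpace X] [BorelSpace X]
    {Γ : Type*} [Group Γ] [MulAction Γ X]
    (hiso : ∀ γ : Γ, Isometry (fun x : X => γ • x))
    (hpd : ∀ K : Set X, IsCompact K → {γ : Γ | ((fun x => γ • x) '' K ∩ K).Nonempty}.Finite)
    (hcc : ∃ D : Set X, IsCompact D ∧ (⋃ γ : Γ, (fun x => γ • x) '' D) = Set.univ)
    (μ : Measure X) (c C : ℝ≥0∞) (hc : 0 < c) (hC : C ≠ ⊤)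
    (hball : ∀ x : X, c ≤ μ (Metric.ball x 1) ∧ μ (Metric.ball x 1) ≤ C)
    (x₀ : X) :
    Filter.limsup
        (fun r : ℝ => Real.log (Nat.card {γ : Γ // dist x₀ (γ • x₀) ≤ r}) / r)
        Filter.atTop =
      Filter.limsup
        (fun r : ℝ => Real.log ((μ (Metric.ball x₀ r)).toReal) / r)
        Filter.atTop := by
  -- basic facts about the isometric action
  have hd : ∀ (γ : Γ) (a b : X), dist (γ • a) (γ • b) = dist a b := fun γ a b =>
    (hiso γ).dist_eq a b
  have hdinv : ∀ (γ : Γ) (a b : X), dist a (γ • b) = dist (γ⁻¹ • a) b := by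
    intro γ a b
    conv_lhs => rw [← hd γ⁻¹ a (γ • b), inv_smul_smul]
  -- the orbit counting sets are finite
  set A : ℝ → Set Γ := fun r => {γ : Γ | dist x₀ (γ • x₀) ≤ r} with hA
  have hfin : ∀ r : ℝ, (A r).Finite := by
    intro r
    refine ((hpd (closedBall x₀ (max r 0)) (isCompact_closedBall _ _)).subset ?_)
    intro γ hγ
    refine ⟨γ • x₀, ⟨x₀, ?_, rfl⟩, ?_⟩
    · simp [mem_closedBall, le_max_right]
    · simp only [mem_closedBall]
      rw [dist_comm]
      exact le_trans hγ (le_max_left _ _)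
  have hone : ∀ r : ℝ, 0 ≤ r → (1 : Γ) ∈ A r := by
    intro r hr; simp [hA, hr]
  -- N r = number of orbit points within distance r
  set N : ℝ → ℕ := fun r => Nat.card {γ : Γ // dist x₀ (γ • x₀) ≤ r} with hN
  have hNcard : ∀ r : ℝ, N r = (hfin r).toFinset.card := by
    intro r
    have h1 : N r = (A r).ncard := Nat.card_coe_set_eq (A r)
    rw [h1, Set.ncard_eq_toFinset_card _ (hfin r)]
  have hNpos : ∀ r : ℝ, 0 ≤ r → 1 ≤ N r := by
    intro r hr
    rw [hNcard r]
    exact Finset.card_pos.mpr ⟨1, (hfin r).mem_toFinset.mpr (hone r hr)⟩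
  -- cocompactness: every point is within distance R of the orbit of x₀
  obtain ⟨D, hDc, hDcov⟩ := hcc
  have hx₀D : ∃ (γ₀ : Γ) (d₁ : X), d₁ ∈ D ∧ γ₀ • d₁ = x₀ := by
    have : x₀ ∈ ⋃ γ : Γ, (fun x => γ • x) '' D := hDcov ▸ mem_univ x₀
    obtain ⟨_, ⟨γ₀, rfl⟩, d₁, hd₁, h⟩ := this
    exact ⟨γ₀, d₁, hd₁, h⟩
  obtain ⟨γ₀, d₁, hd₁D, hγ₀⟩ := hx₀D
  obtain ⟨ρ, hρ⟩ : ∃ ρ, D ⊆ closedBall d₁ ρ := hDc.isBounded.subset_closedBall d₁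
  have hρ0 : 0 ≤ ρ := by
    have := hρ hd₁D; simpa [mem_closedBall] using this
  set R : ℝ := 2 * ρ + 1 with hRdef
  have hR1 : (1 : ℝ) ≤ R := by simp [hRdef]; linarith
  have hR0 : (0 : ℝ) < R := by linarith
  have horb : ∀ y : X, ∃ γ : Γ, dist y (γ • x₀) ≤ R := by
    intro y
    have : y ∈ ⋃ γ : Γ, (fun x => γ • x) '' D := hDcov ▸ mem_univ y
    obtain ⟨_, ⟨γ, rfl⟩, d₂, hd₂, rfl⟩ := this
    refine ⟨γ * γ₀⁻¹, ?_⟩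
    have h1 : (γ * γ₀⁻¹) • x₀ = γ • d₁ := by
      rw [mul_smul, ← hγ₀, inv_smul_smul]
    rw [h1, hd γ d₂ d₁]
    have h2 : dist d₂ d₁ ≤ ρ := by simpa [mem_closedBall] using hρ hd₂
    linarith
  -- covering number of balls of radius 2R by unit balls
  obtain ⟨t, ht⟩ : ∃ t : Finset X, closedBall x₀ (2 * R) ⊆ ⋃ z ∈ t, ball z 1 :=
    (isCompact_closedBall x₀ (2 * R)).elim_finite_subcover (fun z : X => ball z 1)
      (fun z => isOpen_ball) (fun x _ => mem_iUnion.mpr ⟨x, mem_ball_self one_pos⟩)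
  have htne : t.Nonempty := by
    by_contra h
    have : x₀ ∈ ⋃ z ∈ t, ball z 1 := ht (by simp [mem_closedBall]; positivity)
    simp only [Finset.not_nonempty_iff_eq_empty] at h
    simp [h] at this
  have hcover : ∀ γ : Γ, μ (ball (γ • x₀) (2 * R)) ≤ (t.card : ℝ≥0∞) * C := by
    intro γ
    have hsub : ball (γ • x₀) (2 * R) ⊆ ⋃ z ∈ t, ball (γ • z) 1 := by
      intro w hw
      have h1 : γ⁻¹ • w ∈ closedBall x₀ (2 * R) := by
        rw [mem_closedBall, dist_comm, hdinv γ⁻¹ x₀ w, inv_inv, dist_comm]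
        exact le_of_lt (mem_ball.mp hw)
      obtain ⟨z, hz, hzw⟩ : ∃ z ∈ t, γ⁻¹ • w ∈ ball z 1 := by
        have := ht h1
        simpa using this
      refine mem_biUnion hz ?_
      have hw2 : dist (γ • z) w = dist z (γ⁻¹ • w) := by
        conv_lhs => rw [← smul_inv_smul γ w]
        rw [hd]
      rw [mem_ball, dist_comm, hw2, dist_comm]
      exact hzw
    calc μ (ball (γ • x₀) (2 * R)) ≤ ∑ z ∈ t, μ (ball (γ • z) 1) :=
          le_trans (measure_mono hsub) (measure_biUnion_finset_le t _)
      _ ≤ ∑ _z ∈ t, C := Finset.sum_le_sum fun z _ => (hball (γ • z)).2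
      _ = (t.card : ℝ≥0∞) * C := by rw [Finset.sum_const, nsmul_eq_mul]
  -- upper bound for the volume in terms of orbit counting
  have hVub : ∀ r : ℝ, μ (ball x₀ r) ≤ (N (r + R) : ℝ≥0∞) * ((t.card : ℝ≥0∞) * C) := by
    intro r
    have hsub : ball x₀ r ⊆ ⋃ γ ∈ (hfin (r + R)).toFinset, ball (γ • x₀) (2 * R) := by
      intro z hz
      obtain ⟨γ, hγ⟩ := horb z
      have hγA : γ ∈ A (r + R) := by
        have : dist x₀ (γ • x₀) ≤ dist x₀ z + dist z (γ • x₀) := dist_triangle _ _ _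
        rw [mem_ball, dist_comm] at hz
        exact le_trans this (by linarith)
      refine mem_biUnion ((hfin (r + R)).mem_toFinset.mpr hγA) ?_
      rw [mem_ball]
      linarith
    calc μ (ball x₀ r) ≤ ∑ γ ∈ (hfin (r + R)).toFinset, μ (ball (γ • x₀) (2 * R)) :=
          le_trans (measure_mono hsub) (measure_biUnion_finset_le _ _)
      _ ≤ ∑ _γ ∈ (hfin (r + R)).toFinset, (t.card : ℝ≥0∞) * C :=
          Finset.sum_le_sum fun γ _ => hcover γ
      _ = (N (r + R) : ℝ≥0∞) * ((t.card : ℝ≥0∞) * C) := by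
          rw [Finset.sum_const, nsmul_eq_mul, hNcard]
  have hVfin : ∀ r : ℝ, μ (ball x₀ r) ≠ ⊤ := fun r =>
    ne_top_of_le_ne_top (by finiteness) (hVub r)
  have hVlb : ∀ r : ℝ, 1 ≤ r → c ≤ μ (ball x₀ r) := fun r hr =>
    le_trans (hball x₀).1 (measure_mono (ball_subset_ball hr))
  -- multiplicity bound: c · N r ≤ M · μ(B(x₀, r+1))
  set M : ℕ := (hfin 2).toFinset.card with hM
  have hMpos : 1 ≤ M := Finset.card_pos.mpr ⟨1, (hfin 2).mem_toFinset.mpr (hone 2 (by norm_num))⟩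
  have hNub : ∀ r : ℝ, c * (N r : ℝ≥0∞) ≤ (M : ℝ≥0∞) * μ (ball x₀ (r + 1)) := by
    intro r
    classical
    set s := (hfin r).toFinset with hs
    have hmeas : ∀ γ : Γ, Measurable ((ball (γ • x₀) 1).indicator (1 : X → ℝ≥0∞)) :=
      fun γ => measurable_one.indicator measurableSet_ball
    have hpt : ∀ x : X, (∑ γ ∈ s, (ball (γ • x₀) 1).indicator (1 : X → ℝ≥0∞) x)
        ≤ (M : ℝ≥0∞) * (ball x₀ (r + 1)).indicator (1 : X → ℝ≥0∞) x := by
      intro x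
      by_cases hx : x ∈ ball x₀ (r + 1)
      · rw [Set.indicator_of_mem hx, Pi.one_apply, mul_one]
        have hsum : (∑ γ ∈ s, (ball (γ • x₀) 1).indicator (1 : X → ℝ≥0∞) x)
            = ((s.filter (fun γ => x ∈ ball (γ • x₀) 1)).card : ℝ≥0∞) := by
          rw [← Finset.sum_boole]
          exact Finset.sum_congr rfl fun γ _ => by
            by_cases h : x ∈ ball (γ • x₀) 1 <;> simp [Set.indicator_apply, h]
        rw [hsum]
        refine Nat.cast_le.mpr ?_
        by_cases hne : (s.filter (fun γ => x ∈ ball (γ • x₀) 1)).Nonempty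
        · obtain ⟨γs, hγs⟩ := hne
          have hγsx : x ∈ ball (γs • x₀) 1 := (Finset.mem_filter.mp hγs).2
          refine Finset.card_le_card_of_injOn (fun γ => γs⁻¹ * γ) ?_ ?_
          · intro γ hγ
            have hγx : x ∈ ball (γ • x₀) 1 := (Finset.mem_filter.mp hγ).2
            refine (hfin 2).mem_toFinset.mpr ?_
            show dist x₀ ((γs⁻¹ * γ) • x₀) ≤ 2
            rw [mul_smul, hdinv, inv_inv]
            calc dist (γs • x₀) (γ • x₀) ≤ dist (γs • x₀) x + dist x (γ • x₀) :=
                  dist_triangle _ _ _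
              _ ≤ 2 := by
                  rw [mem_ball] at hγx hγsx
                  rw [dist_comm] at hγsx
                  linarith
          · intro a _ b _ hab
            simpa using mul_left_cancel hab
        · rw [Finset.not_nonempty_iff_eq_empty] at hne
          rw [hne]
          exact Nat.zero_le M
      · rw [Set.indicator_of_notMem hx, mul_zero]
        refine le_of_eq (Finset.sum_eq_zero fun γ hγ => ?_)
        refine Set.indicator_of_notMem (fun hxx => hx ?_) _
        rw [mem_ball] at hxx ⊢
        have hγ' : dist x₀ (γ • x₀) ≤ r := (hfin r).mem_toFinset.mp hγ
        calc dist x x₀ ≤ dist x (γ • x₀) + dist (γ • x₀) x₀ := dist_triangle _ _ _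
          _ < r + 1 := by rw [dist_comm (γ • x₀) x₀]; linarith
    calc c * (N r : ℝ≥0∞) = ∑ _γ ∈ s, c := by
          rw [Finset.sum_const, nsmul_eq_mul, hNcard r, mul_comm]
      _ ≤ ∑ γ ∈ s, μ (ball (γ • x₀) 1) := Finset.sum_le_sum fun γ _ => (hball _).1
      _ = ∑ γ ∈ s, ∫⁻ x, (ball (γ • x₀) 1).indicator (1 : X → ℝ≥0∞) x ∂μ :=
          Finset.sum_congr rfl fun γ _ => (lintegral_indicator_one measurableSet_ball).symm
      _ = ∫⁻ x, ∑ γ ∈ s, (ball (γ • x₀) 1).indicator (1 : X → ℝ≥0∞) x ∂μ :=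
          (lintegral_finset_sum' s fun γ _ => (hmeas γ).aemeasurable).symm
      _ ≤ ∫⁻ x, (M : ℝ≥0∞) * (ball x₀ (r + 1)).indicator (1 : X → ℝ≥0∞) x ∂μ :=
          lintegral_mono hpt
      _ = (M : ℝ≥0∞) * μ (ball x₀ (r + 1)) := by
          rw [lintegral_const_mul' _ _ (by simp : (M : ℝ≥0∞) ≠ ⊤),
            lintegral_indicator_one measurableSet_ball]
  -- constants
  have hcC : c ≠ ⊤ := ne_top_of_le_ne_top hC (le_trans (hball x₀).1 (hball x₀).2)
  have hcRpos : 0 < c.toReal := ENNReal.toReal_pos hc.ne' hcC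
  have hCne0 : C ≠ 0 := fun h => by
    have := le_trans (hball x₀).1 (hball x₀).2; rw [h] at this
    exact absurd (le_antisymm this zero_le).symm hc.ne
  have hCRpos : 0 < C.toReal := ENNReal.toReal_pos hCne0 hC
  have htpos : (0 : ℝ) < t.card := by exact_mod_cast Finset.card_pos.mpr htne
  set K : ℝ := max (Real.log M - Real.log c.toReal)
    (Real.log ((t.card : ℝ) * C.toReal)) with hK
  -- first eventual inequality
  have h₁ : ∀ᶠ r in atTop, Real.log (N r : ℝ) ≤
      Real.log ((μ (ball x₀ (r + R))).toReal) + K := by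
    filter_upwards [eventually_ge_atTop (1 : ℝ)] with r hr
    have hineq : c * (N r : ℝ≥0∞) ≤ (M : ℝ≥0∞) * μ (ball x₀ (r + R)) :=
      le_trans (hNub r)
        (mul_le_mul_right (measure_mono (ball_subset_ball (by linarith))) _)
    have h2 : c.toReal * (N r : ℝ) ≤ (M : ℝ) * (μ (ball x₀ (r + R))).toReal := by
      have := (ENNReal.toReal_le_toReal
        (ENNReal.mul_ne_top hcC (by simp))
        (ENNReal.mul_ne_top (by simp) (hVfin _))).mpr hineq
      simpa [ENNReal.toReal_mul] using this
    have hVpos : 0 < (μ (ball x₀ (r + R))).toReal :=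
      ENNReal.toReal_pos (lt_of_lt_of_le hc (hVlb _ (by linarith))).ne' (hVfin _)
    have hNr1 : (1 : ℝ) ≤ (N r : ℝ) := by exact_mod_cast hNpos r (by linarith)
    have hM1 : (1 : ℝ) ≤ (M : ℝ) := by exact_mod_cast hMpos
    have hlog := Real.log_le_log (by positivity) h2
    rw [Real.log_mul (ne_of_gt hcRpos) (by positivity),
      Real.log_mul (by positivity) (ne_of_gt hVpos)] at hlog
    have hKle : Real.log M - Real.log c.toReal ≤ K := le_max_left _ _
    linarith
  -- second eventual inequality
  have h₂ : ∀ᶠ r in atTop, Real.log ((μ (ball x₀ r)).toReal) ≤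
      Real.log (N (r + R) : ℝ) + K := by
    filter_upwards [eventually_ge_atTop (1 : ℝ)] with r hr
    have hineq := hVub r
    have h2 : (μ (ball x₀ r)).toReal ≤ (N (r + R) : ℝ) * ((t.card : ℝ) * C.toReal) := by
      have := (ENNReal.toReal_le_toReal (hVfin r)
        (ENNReal.mul_ne_top (by simp) (ENNReal.mul_ne_top (by simp) hC))).mpr hineq
      simpa [ENNReal.toReal_mul] using this
    have hVpos : 0 < (μ (ball x₀ r)).toReal :=
      ENNReal.toReal_pos (lt_of_lt_of_le hc (hVlb _ hr)).ne' (hVfin _)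
    have hNr1 : (1 : ℝ) ≤ (N (r + R) : ℝ) := by exact_mod_cast hNpos (r + R) (by linarith)
    have hlog := Real.log_le_log hVpos h2
    rw [Real.log_mul (by positivity) (by positivity)] at hlog
    have hKle : Real.log ((t.card : ℝ) * C.toReal) ≤ K := le_max_right _ _
    linarith
  exact aux_limsup_eq h₁ h₂
end
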